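/- arXiv:2212.07002 — 8 statements merged into one kernel-verified Lean document; each statement's English description precedes it below -/
import Mathlib

section
/- Let S be a feasible schedule in which all jobs have release time 1 and due date T, and let i, j ∈ J(S) be two scheduled jobs with π_S(i) < π_S(j) and e_i > e_j. Then the schedule S′ obtained from S by swapping the two jobs (i.e., J(S′) = J(S), π_{S′}(i) = π_S(j), π_{S′}(j) = π_S(i), and π_{S′} = π_S on all other jobs) is also feasible. -/
/-- The energy available immediately before slot `t`:
the total energy harvestable at slots `1,…,t-1`, minus, for each job `i ∈ J`
scheduled at a slot `σ i < t`, its energy requirement `e i` plus the harvestable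
energy `h (σ i)` lost at its execution slot. -/
def energyBefore (e h : ℕ → ℤ) (J : Finset ℕ) (σ : ℕ → ℕ) (t : ℕ) : ℤ :=
  (∑ τ ∈ Finset.Icc 1 (t - 1), h τ) -
    ∑ i ∈ J.filter (fun i => σ i < t), (e i + h (σ i))

/-- A schedule `(J, σ)` is feasible for an EAS instance with `n` jobs, `T` slots,
release times `r`, due dates `d`, energy requirements `e` and harvest profile `h`. -/
def IsFeasible (n T : ℕ) (r d : ℕ → ℕ) (e h : ℕ → ℤ)
    (J : Finset ℕ) (σ : ℕ → ℕ) : Prop :=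
  J ⊆ Finset.Icc 1 n ∧ Set.InjOn σ ↑J ∧
    ∀ i ∈ J, 1 ≤ σ i ∧ σ i ≤ T ∧ r i ≤ σ i ∧ σ i ≤ d i ∧
      e i ≤ energyBefore e h J σ (σ i)

private lemma sum_two_diff {F G : ℕ → ℤ} {J : Finset ℕ} {i j : ℕ}
    (hi : i ∈ J) (hj : j ∈ J) (hij : i ≠ j)
    (hFG : ∀ m ∈ J, m ≠ i → m ≠ j → F m = G m) :
    ∑ m ∈ J, F m = ∑ m ∈ J, G m + ((F i - G i) + (F j - G j)) := by
  have hj' : j ∈ J.erase i := Finset.mem_erase.mpr ⟨hij.symm, hj⟩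
  have h1 : ∑ m ∈ J, F m = F i + (F j + ∑ m ∈ (J.erase i).erase j, F m) := by
    rw [Finset.add_sum_erase _ _ hj', Finset.add_sum_erase _ _ hi]
  have h2 : ∑ m ∈ J, G m = G i + (G j + ∑ m ∈ (J.erase i).erase j, G m) := by
    rw [Finset.add_sum_erase _ _ hj', Finset.add_sum_erase _ _ hi]
  have h3 : ∑ m ∈ (J.erase i).erase j, F m = ∑ m ∈ (J.erase i).erase j, G m := by
    refine Finset.sum_congr rfl fun m hm => ?_
    have hm1 := Finset.mem_erase.mp hm
    have hm2 := Finset.mem_erase.mp hm1.2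
    exact hFG m hm2.2 hm2.1 hm1.1
  rw [h1, h2, h3]; ring

private lemma eb_swap (e h : ℕ → ℤ) (J : Finset ℕ) (σ : ℕ → ℕ) (i j : ℕ)
    (hi : i ∈ J) (hj : j ∈ J) (hij : i ≠ j) (t : ℕ) :
    energyBefore e h J (Function.update (Function.update σ i (σ j)) j (σ i)) t
      = energyBefore e h J σ t
        + ((if σ i < t then e i - e j else 0) + (if σ j < t then e j - e i else 0)) := by
  set σ' := Function.update (Function.update σ i (σ j)) j (σ i) with hσ'
  have hσ'i : σ' i = σ j := by
    rw [hσ', Function.update_of_ne hij, Function.update_self]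
  have hσ'j : σ' j = σ i := by rw [hσ', Function.update_self]
  have hσ'm : ∀ m, m ≠ i → m ≠ j → σ' m = σ m := fun m h1 h2 => by
    rw [hσ', Function.update_of_ne h2, Function.update_of_ne h1]
  unfold energyBefore
  rw [Finset.sum_filter, Finset.sum_filter]
  rw [sum_two_diff hi hj hij
    (F := fun m => if σ' m < t then e m + h (σ' m) else 0)
    (G := fun m => if σ m < t then e m + h (σ m) else 0)
    (fun m hm h1 h2 => by simp only [hσ'm m h1 h2])]
  rw [hσ'i, hσ'j]
  split_ifs <;> ring

/-- If `S = (J, σ)` is feasible (all jobs released at slot 1 with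
due date `T`), `i, j ∈ J`, `σ i < σ j` and `e i > e j`, then the schedule obtained
by swapping the execution slots of `i` and `j` is also feasible. -/
theorem swap_feasible (n T : ℕ) (e h : ℕ → ℤ)
    (he : ∀ i, 0 ≤ e i) (hh : ∀ t, 0 ≤ h t)
    (J : Finset ℕ) (σ : ℕ → ℕ)
    (hfeas : IsFeasible n T (fun _ => 1) (fun _ => T) e h J σ)
    (i j : ℕ) (hi : i ∈ J) (hj : j ∈ J)
    (hlt : σ i < σ j) (hee : e j < e i) :
    IsFeasible n T (fun _ => 1) (fun _ => T) e h J
      (Function.update (Function.update σ i (σ j)) j (σ i)) := by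
  obtain ⟨hsub, hinj, hcons⟩ := hfeas
  have hij : i ≠ j := fun hh => by subst hh; exact lt_irrefl _ hlt
  set σ' := Function.update (Function.update σ i (σ j)) j (σ i) with hσ'
  have hswap : ∀ x, σ' x = σ (Equiv.swap i j x) := by
    intro x
    rcases eq_or_ne x i with rfl | hxi
    · rw [hσ', Function.update_of_ne hij, Function.update_self, Equiv.swap_apply_left]
    rcases eq_or_ne x j with rfl | hxj
    · rw [hσ', Function.update_self, Equiv.swap_apply_right]
    · rw [hσ', Function.update_of_ne hxj, Function.update_of_ne hxi,
        Equiv.swap_apply_of_ne_of_ne hxi hxj]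
  have hswapmem : ∀ x ∈ J, Equiv.swap i j x ∈ J := by
    intro x hx
    rcases eq_or_ne x i with rfl | hxi
    · rw [Equiv.swap_apply_left]; exact hj
    rcases eq_or_ne x j with rfl | hxj
    · rw [Equiv.swap_apply_right]; exact hi
    · rw [Equiv.swap_apply_of_ne_of_ne hxi hxj]; exact hx
  have hD : ∀ t, energyBefore e h J σ t ≤ energyBefore e h J σ' t := by
    intro t
    rw [hσ', eb_swap e h J σ i j hi hj hij t]
    split_ifs <;> linarith
  refine ⟨hsub, ?_, ?_⟩
  · intro x hx y hy hxy
    rw [hswap, hswap] at hxy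
    have := hinj (hswapmem x hx) (hswapmem y hy) hxy
    exact (Equiv.swap i j).injective this
  · intro k hk
    have hbounds := hcons (Equiv.swap i j k) (hswapmem k hk)
    rw [← hswap] at hbounds
    refine ⟨hbounds.1, hbounds.2.1, hbounds.1, hbounds.2.1, ?_⟩
    rcases eq_or_ne k i with hki | hki
    · rw [hki]
      have hσ'i : σ' i = σ j := by
        rw [hσ', Function.update_of_ne hij, Function.update_self]
      have hje := (hcons j hj).2.2.2.2
      rw [hσ'i, hσ', eb_swap e h J σ i j hi hj hij (σ j)]
      rw [if_pos hlt, if_neg (lt_irrefl _)]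
      linarith
    rcases eq_or_ne k j with hkj | hkj
    · rw [hkj]
      have hσ'j : σ' j = σ i := by rw [hσ', Function.update_self]
      have hie := (hcons i hi).2.2.2.2
      rw [hσ'j, hσ', eb_swap e h J σ i j hi hj hij (σ i)]
      rw [if_neg (lt_irrefl _), if_neg (not_lt.mpr hlt.le)]
      linarith
    · have hσ'k : σ' k = σ k := by
        rw [hσ', Function.update_of_ne hkj, Function.update_of_ne hki]
      have hke := (hcons k hk).2.2.2.2
      rw [hσ'k]
      exact le_trans hke (hD (σ k))
end

section
/- Suppose all jobs have identical release times r_i = 1 and due dates d_i = T, and the jobs are indexed so that e_1 ≤ e_2 ≤ … ≤ e_n. If there exists a feasible schedule scheduling exactly m jobs, then there exists a feasible schedule S with J(S) = {1, 2, …, m}, i.e., a feasible schedule that schedules exactly the prefix J_1, …, J_m of the jobs. In particular, there exists an optimal (maximum-cardinality) feasible schedule that schedules a prefix of the sequence J_1, …, J_n. -/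
lemma aux_ge (m : ℕ) (g : Fin m → ℕ) (hg : StrictMono g) (h1 : ∀ k, 1 ≤ g k) :
    ∀ j (hj : j < m), j + 1 ≤ g ⟨j, hj⟩ := by
  intro j
  induction j with
  | zero => intro hj; exact h1 _
  | succ j ih =>
    intro hj
    have hj' : j < m := Nat.lt_of_succ_lt hj
    have h2 := hg (show (⟨j, hj'⟩ : Fin m) < ⟨j+1, hj⟩ from by simp [Fin.lt_def])
    have h3 := ih hj'
    omega

/-- With identical release times `1` and due dates `T`, and jobs
indexed in non-decreasing order of energy requirement, if some feasible schedule
schedules exactly `m` jobs then the prefix `{1,…,m}` can be scheduled feasibly. -/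
theorem prefix_schedulable (n T : ℕ) (e h : ℕ → ℤ)
    (he : ∀ i, 0 ≤ e i) (hh : ∀ t, 0 ≤ h t)
    (hmono : ∀ i j, 1 ≤ i → i ≤ j → j ≤ n → e i ≤ e j)
    (m : ℕ) (J : Finset ℕ) (σ : ℕ → ℕ)
    (hfeas : IsFeasible n T (fun _ => 1) (fun _ => T) e h J σ)
    (hcard : J.card = m) :
    ∃ σ' : ℕ → ℕ,
      IsFeasible n T (fun _ => 1) (fun _ => T) e h (Finset.Icc 1 m) σ' := by
  classical
  obtain ⟨hJ, hinj, hcond⟩ := hfeas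
  set g := J.orderEmbOfFin hcard with hgdef
  set f : ℕ → ℕ := fun i => if hi : i - 1 < m then g ⟨i - 1, hi⟩ else 0 with hfdef
  have hgmem : ∀ k : Fin m, g k ∈ J := fun k => J.orderEmbOfFin_mem hcard k
  have hg1 : ∀ k : Fin m, 1 ≤ g k := fun k => (Finset.mem_Icc.mp (hJ (hgmem k))).1
  have hgmono : StrictMono g := (J.orderEmbOfFin hcard).strictMono
  -- basic facts about f on Icc 1 m
  have hfmem : ∀ i ∈ Finset.Icc 1 m, f i ∈ J := by
    intro i hi
    rw [Finset.mem_Icc] at hi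
    have hlt : i - 1 < m := by omega
    simp only [hfdef, dif_pos hlt]
    exact hgmem _
  have hfge : ∀ i ∈ Finset.Icc 1 m, i ≤ f i := by
    intro i hi
    rw [Finset.mem_Icc] at hi
    have hlt : i - 1 < m := by omega
    have := aux_ge m g hgmono hg1 (i - 1) hlt
    simp only [hfdef, dif_pos hlt]
    omega
  have hfle : ∀ i ∈ Finset.Icc 1 m, e i ≤ e (f i) := by
    intro i hi
    have h1 := (Finset.mem_Icc.mp hi).1
    have h2 := Finset.mem_Icc.mp (hJ (hfmem i hi))
    exact hmono i (f i) h1 (hfge i hi) h2.2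
  have hfinj : Set.InjOn f ↑(Finset.Icc 1 m) := by
    intro a ha b hb hab
    rw [Finset.coe_Icc, Set.mem_Icc] at ha hb
    have hla : a - 1 < m := by omega
    have hlb : b - 1 < m := by omega
    simp only [hfdef, dif_pos hla, dif_pos hlb] at hab
    have := hgmono.injective hab
    have : a - 1 = b - 1 := Fin.mk.inj_iff.mp this
    omega
  -- energy comparison
  have hEn : ∀ t, energyBefore e h J σ t ≤ energyBefore e h (Finset.Icc 1 m) (σ ∘ f) t := by
    intro t
    unfold energyBefore
    apply sub_le_sub_left
    set A := (Finset.Icc 1 m).filter (fun i => (σ ∘ f) i < t) with hA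
    have hAsub : A ⊆ Finset.Icc 1 m := Finset.filter_subset _ _
    have hinjA : Set.InjOn f ↑A := hfinj.mono (by exact_mod_cast hAsub)
    calc ∑ i ∈ A, (e i + h ((σ ∘ f) i))
        ≤ ∑ i ∈ A, (e (f i) + h (σ (f i))) := by
          apply Finset.sum_le_sum
          intro i hiA
          exact add_le_add_left (hfle i (hAsub hiA)) _
      _ = ∑ j ∈ A.image f, (e j + h (σ j)) := by
          rw [Finset.sum_image (fun a ha b hb => hinjA ha hb)]
      _ ≤ ∑ j ∈ J.filter (fun j => σ j < t), (e j + h (σ j)) := by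
          apply Finset.sum_le_sum_of_subset_of_nonneg
          · intro j hj
            obtain ⟨i, hiA, rfl⟩ := Finset.mem_image.mp hj
            have hi := hAsub hiA
            rw [hA, Finset.mem_filter] at hiA
            exact Finset.mem_filter.mpr ⟨hfmem i hi, hiA.2⟩
          · intro j _ _
            exact add_nonneg (he j) (hh (σ j))
  refine ⟨σ ∘ f, ?_, ?_, ?_⟩
  · -- Icc 1 m ⊆ Icc 1 n
    have hmn : m ≤ n := by
      have := Finset.card_le_card hJ
      rw [hcard, Nat.card_Icc] at this
      omega
    exact Finset.Icc_subset_Icc_right hmn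
  · intro a ha b hb hab
    have hfa := hfmem a (by exact_mod_cast ha)
    have hfb := hfmem b (by exact_mod_cast hb)
    have : f a = f b := hinj (by exact_mod_cast hfa) (by exact_mod_cast hfb) hab
    exact hfinj ha hb this
  · intro i hi
    have hmemJ := hfmem i hi
    obtain ⟨h1, h2, h3, h4, h5⟩ := hcond (f i) hmemJ
    exact ⟨h1, h2, h3, h4, le_trans (hfle i hi) (le_trans h5 (hEn (σ (f i))))⟩
end

section
/- Suppose all jobs have identical release times r_i = 1 and due dates d_i = T. For every feasible schedule S there exists a feasible schedule S′ with J(S′) = J(S) in which the jobs are scheduled in non-decreasing order of their energy requirement, i.e., for all i, j ∈ J(S′), if π_{S′}(i) < π_{S′}(j) then e_i ≤ e_j. In particular, there exists an optimal (maximum-cardinality) feasible schedule whose jobs are scheduled in non-decreasing order of energy requirement. -/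
/-- If two finsets have the same cardinality and every element of `X` has
weight at most that of every element of `Y`, then the sum over `X` is at most
the sum over `Y`. -/
lemma aux_sum_le_sum_of_card_eq (w : ℕ → ℤ) {X Y : Finset ℕ}
    (hc : X.card = Y.card) (hle : ∀ x ∈ X, ∀ y ∈ Y, w x ≤ w y) :
    ∑ x ∈ X, w x ≤ ∑ y ∈ Y, w y := by
  have φ : X ≃ Y := Finset.equivOfCardEq hc
  have h1 : ∑ y ∈ Y, w y = ∑ x ∈ X.attach, w (φ x) := by
    rw [← Finset.sum_attach Y (fun y => w y)]
    exact (Equiv.sum_comp φ (fun y => w (y : ℕ))).symm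
  rw [h1, ← Finset.sum_attach X (fun x => w x)]
  exact Finset.sum_le_sum (fun x _ => hle x x.2 (φ x) (φ x).2)

/-- Exchange lemma: if `|B| = |A|` and every element of `B \ A` weighs at most
every element of `A \ B`, then `∑_B w ≤ ∑_A w`. -/
lemma aux_sum_le_sum_exchange (w : ℕ → ℤ) {A B : Finset ℕ}
    (hc : B.card = A.card)
    (hle : ∀ b ∈ B \ A, ∀ a ∈ A \ B, w b ≤ w a) :
    ∑ x ∈ B, w x ≤ ∑ x ∈ A, w x := by
  have hcard : (B \ A).card = (A \ B).card := by
    have h1 : (B ∩ A).card + (B \ A).card = B.card := by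
      rw [Finset.card_inter_add_card_sdiff]
    have h2 : (A ∩ B).card + (A \ B).card = A.card := by
      rw [Finset.card_inter_add_card_sdiff]
    rw [Finset.inter_comm] at h2
    omega
  have key : ∑ x ∈ B \ A, w x ≤ ∑ x ∈ A \ B, w x :=
    aux_sum_le_sum_of_card_eq w hcard hle
  have hB : ∑ x ∈ B \ A, w x + ∑ x ∈ B ∩ A, w x = ∑ x ∈ B, w x := by
    have := Finset.sum_sdiff (f := w) (show B ∩ A ⊆ B from Finset.inter_subset_left)
    rwa [Finset.sdiff_inter_self_left] at this
  have hA : ∑ x ∈ A \ B, w x + ∑ x ∈ A ∩ B, w x = ∑ x ∈ A, w x := by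
    have := Finset.sum_sdiff (f := w) (show A ∩ B ⊆ A from Finset.inter_subset_left)
    rwa [Finset.sdiff_inter_self_left] at this
  have hIB : ∑ x ∈ B ∩ A, w x = ∑ x ∈ A ∩ B, w x := by rw [Finset.inter_comm]
  linarith

/-- With identical release times `1` and due dates `T`, every
feasible schedule can be rearranged, on the same set of jobs, so that jobs are
executed in non-decreasing order of their energy requirement. -/
theorem exists_sorted_rearrangement (n T : ℕ) (e h : ℕ → ℤ)
    (he : ∀ i, 0 ≤ e i) (hh : ∀ t, 0 ≤ h t)
    (J : Finset ℕ) (σ : ℕ → ℕ)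
    (hfeas : IsFeasible n T (fun _ => 1) (fun _ => T) e h J σ) :
    ∃ σ' : ℕ → ℕ,
      IsFeasible n T (fun _ => 1) (fun _ => T) e h J σ' ∧
        ∀ i ∈ J, ∀ j ∈ J, σ' i < σ' j → e i ≤ e j := by
  classical
  obtain ⟨hJn, hinj, hcond⟩ := hfeas
  set m := J.card with hm
  set S := J.image σ with hSdef
  have hScard : S.card = m := Finset.card_image_of_injOn hinj
  set φ : Fin m ≃ {x // x ∈ J} := J.equivFin.symm with hφ
  set w : Fin m → ℤ := fun p => e (φ p) with hw
  set π : Equiv.Perm (Fin m) := Tuple.sort w with hπ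
  set f : Fin m → ℕ := fun p => ((φ (π p)) : ℕ) with hf
  have hfJ : ∀ p, f p ∈ J := fun p => (φ (π p)).2
  have hmono : Monotone (fun p => e (f p)) := Tuple.monotone_sort w
  have hfinj : Function.Injective f := by
    intro p q hpq
    have h1 : φ (π p) = φ (π q) := Subtype.ext hpq
    simpa using π.injective (φ.injective h1)
  set g : Fin m → ℕ := fun q => S.orderEmbOfFin hScard q with hg
  have hgS : ∀ p, g p ∈ S := fun p => S.orderEmbOfFin_mem hScard p
  have hgmono : StrictMono g := (S.orderEmbOfFin hScard).strictMono
  have hginj : Function.Injective g := hgmono.injective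
  have hgrange : ∀ s ∈ S, ∃ q, g q = s := by
    intro s hs
    have h2 : s ∈ Set.range (S.orderEmbOfFin hScard) := by
      rw [S.range_orderEmbOfFin hScard]; exact hs
    obtain ⟨q, hq⟩ := h2
    exact ⟨q, hq⟩
  set ψ : (i : ℕ) → i ∈ J → Fin m := fun i hi => π.symm (φ.symm ⟨i, hi⟩) with hψ
  have hfψ : ∀ i (hi : i ∈ J), f (ψ i hi) = i := by
    intro i hi
    simp [hf, hψ]
  have hψf : ∀ p, ψ (f p) (hfJ p) = p := by
    intro p
    have h3 : (⟨f p, hfJ p⟩ : {x // x ∈ J}) = φ (π p) := rfl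
    simp [hψ, h3]
  set σ' : ℕ → ℕ := fun i => if hi : i ∈ J then g (ψ i hi) else 0 with hσ'
  have hσ'eq : ∀ i (hi : i ∈ J), σ' i = g (ψ i hi) := fun i hi => dif_pos hi
  have hσ'f : ∀ p, σ' (f p) = g p := by
    intro p
    rw [hσ'eq (f p) (hfJ p), hψf p]
  -- the filter identity
  have hfilter : ∀ p : Fin m, J.filter (fun j => σ' j < g p) =
      (Finset.univ.filter (fun q => q < p)).image f := by
    intro p
    ext j
    simp only [Finset.mem_filter, Finset.mem_image, Finset.mem_univ, true_and]
    constructor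
    · rintro ⟨hj, hlt⟩
      refine ⟨ψ j hj, ?_, hfψ j hj⟩
      rw [hσ'eq j hj] at hlt
      exact hgmono.lt_iff_lt.mp hlt
    · rintro ⟨q, hq, rfl⟩
      exact ⟨hfJ q, by rw [hσ'f q]; exact hgmono hq⟩
  -- the key energy inequality
  have hkey : ∀ p : Fin m, e (f p) ≤ energyBefore e h J σ' (g p) := by
    intro p
    set t := g p with ht
    obtain ⟨i₀, hi₀J, hi₀⟩ := Finset.mem_image.mp (hgS p)
    have hold : e i₀ ≤ energyBefore e h J σ t := by
      have := (hcond i₀ hi₀J).2.2.2.2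
      rwa [hi₀] at this
    set F := J.filter (fun j => σ j < t) with hF
    set A := J.filter (fun j => σ j ≤ t) with hA
    have hi₀F : i₀ ∉ F := by simp [hF, hi₀, ht]
    have hAins : A = insert i₀ F := by
      ext j
      simp only [hA, hF, Finset.mem_filter, Finset.mem_insert]
      constructor
      · rintro ⟨hj, hle⟩
        rcases lt_or_eq_of_le hle with h4 | h4
        · exact Or.inr ⟨hj, h4⟩
        · exact Or.inl (hinj hj hi₀J (by rw [h4, hi₀]))
      · rintro (rfl | ⟨hj, hlt⟩)
        · exact ⟨hi₀J, le_of_eq hi₀⟩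
        · exact ⟨hj, le_of_lt hlt⟩
    -- image of F under σ
    have hFimg : F.image σ = S.filter (fun s => s < t) := by
      ext s
      simp only [Finset.mem_image, Finset.mem_filter, hF, hSdef]
      constructor
      · rintro ⟨j, ⟨hj, hlt⟩, rfl⟩
        exact ⟨⟨j, hj, rfl⟩, hlt⟩
      · rintro ⟨hs, hlt⟩
        obtain ⟨j, hj, rfl⟩ := hs
        exact ⟨j, ⟨hj, hlt⟩, rfl⟩
    have hAimg : A.image σ = S.filter (fun s => s ≤ t) := by
      ext s
      simp only [Finset.mem_image, Finset.mem_filter, hA, hSdef]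
      constructor
      · rintro ⟨j, ⟨hj, hle⟩, rfl⟩
        exact ⟨⟨j, hj, rfl⟩, hle⟩
      · rintro ⟨hs, hle⟩
        obtain ⟨j, hj, rfl⟩ := hs
        exact ⟨j, ⟨hj, hle⟩, rfl⟩
    -- slots below t are exactly g of indices below p
    have hSlt : S.filter (fun s => s < t) = (Finset.univ.filter (fun q => q < p)).image g := by
      ext s
      simp only [Finset.mem_filter, Finset.mem_image, Finset.mem_univ, true_and]
      constructor
      · rintro ⟨hs, hlt⟩
        obtain ⟨q, rfl⟩ := hgrange s hs
        exact ⟨q, hgmono.lt_iff_lt.mp hlt, rfl⟩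
      · rintro ⟨q, hq, rfl⟩
        exact ⟨hgS q, hgmono hq⟩
    have hSle : S.filter (fun s => s ≤ t) = (Finset.univ.filter (fun q => q ≤ p)).image g := by
      ext s
      simp only [Finset.mem_filter, Finset.mem_image, Finset.mem_univ, true_and]
      constructor
      · rintro ⟨hs, hle⟩
        obtain ⟨q, rfl⟩ := hgrange s hs
        exact ⟨q, hgmono.le_iff_le.mp hle, rfl⟩
      · rintro ⟨q, hq, rfl⟩
        exact ⟨hgS q, hgmono.monotone hq⟩
    -- sum of harvests at occupied slots below t
    have hFh : ∑ j ∈ F, h (σ j) = ∑ q ∈ Finset.univ.filter (fun q => q < p), h (g q) := by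
      have h5 : ∑ s ∈ F.image σ, h s = ∑ j ∈ F, h (σ j) :=
        Finset.sum_image (fun x hx y hy hxy =>
          hinj (Finset.mem_filter.mp hx).1 (Finset.mem_filter.mp hy).1 hxy)
      rw [← h5, hFimg, hSlt]
      exact Finset.sum_image (fun x _ y _ hxy => hginj hxy)
    -- cardinality of A
    have hAcard : A.card = p.val + 1 := by
      have h6 : A.card = (A.image σ).card :=
        (Finset.card_image_of_injOn (fun x hx y hy hxy =>
          hinj (Finset.mem_filter.mp hx).1 (Finset.mem_filter.mp hy).1 hxy)).symm
      rw [h6, hAimg, hSle, Finset.card_image_of_injective _ hginj]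
      have h7 : Finset.univ.filter (fun q => q ≤ p) = Finset.Iic p := by
        ext q; simp
      rw [h7, Fin.card_Iic]
    -- B : prefix of sorted enumeration
    set B := (Finset.univ.filter (fun q : Fin m => q ≤ p)).image f with hB
    have hBcard : B.card = p.val + 1 := by
      rw [hB, Finset.card_image_of_injective _ hfinj]
      have h7 : Finset.univ.filter (fun q => q ≤ p) = Finset.Iic p := by
        ext q; simp
      rw [h7, Fin.card_Iic]
    -- exchange argument
    have hBA : ∑ x ∈ B, e x ≤ ∑ x ∈ A, e x := by
      apply aux_sum_le_sum_exchange e (by rw [hBcard, hAcard])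
      intro b hb a ha
      obtain ⟨hbB, _⟩ := Finset.mem_sdiff.mp hb
      obtain ⟨haA, haB⟩ := Finset.mem_sdiff.mp ha
      obtain ⟨q, hq, rfl⟩ := Finset.mem_image.mp hbB
      have hqle : q ≤ p := (Finset.mem_filter.mp hq).2
      have haJ : a ∈ J := (Finset.mem_filter.mp haA).1
      have hagt : p < ψ a haJ := by
        by_contra hcon
        push_neg at hcon
        exact haB (Finset.mem_image.mpr ⟨ψ a haJ,
          Finset.mem_filter.mpr ⟨Finset.mem_univ _, hcon⟩, hfψ a haJ⟩)
      calc e (f q) ≤ e (f (ψ a haJ)) := hmono (le_of_lt (lt_of_le_of_lt hqle hagt))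
        _ = e a := by rw [hfψ a haJ]
    -- split sums
    have hBsum : ∑ x ∈ B, e x =
        e (f p) + ∑ q ∈ Finset.univ.filter (fun q => q < p), e (f q) := by
      rw [hB, Finset.sum_image (fun x _ y _ hxy => hfinj hxy)]
      have h8 : Finset.univ.filter (fun q : Fin m => q ≤ p) =
          insert p (Finset.univ.filter (fun q => q < p)) := by
        ext q
        simp only [Finset.mem_filter, Finset.mem_univ, true_and, Finset.mem_insert]
        constructor
        · intro hle
          rcases lt_or_eq_of_le hle with h9 | h9
          · exact Or.inr h9
          · exact Or.inl h9
        · rintro (rfl | hlt)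
          · exact le_refl _
          · exact le_of_lt hlt
      rw [h8, Finset.sum_insert (by simp)]
    have hAsum : ∑ x ∈ A, e x = e i₀ + ∑ x ∈ F, e x := by
      rw [hAins, Finset.sum_insert hi₀F]
    -- unfold old feasibility
    have hold2 : e i₀ + ∑ x ∈ F, e x + ∑ j ∈ F, h (σ j) ≤
        ∑ τ ∈ Finset.Icc 1 (t - 1), h τ := by
      have h10 : energyBefore e h J σ t =
          (∑ τ ∈ Finset.Icc 1 (t - 1), h τ) - (∑ x ∈ F, e x + ∑ j ∈ F, h (σ j)) := by
        rw [energyBefore, Finset.sum_add_distrib]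
      rw [h10] at hold
      linarith
    -- new schedule energy
    have hnew : energyBefore e h J σ' t =
        (∑ τ ∈ Finset.Icc 1 (t - 1), h τ) -
          (∑ q ∈ Finset.univ.filter (fun q => q < p), e (f q) +
           ∑ q ∈ Finset.univ.filter (fun q => q < p), h (g q)) := by
      rw [energyBefore, hfilter p]
      rw [Finset.sum_image (fun x _ y _ hxy => hfinj hxy)]
      have h11 : ∀ q ∈ Finset.univ.filter (fun q : Fin m => q < p),
          e (f q) + h (σ' (f q)) = e (f q) + h (g q) := by
        intro q _; rw [hσ'f q]
      rw [Finset.sum_congr rfl h11, Finset.sum_add_distrib]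
    rw [hnew]
    have h12 := hBA
    rw [hBsum, hAsum] at h12
    rw [hFh] at hold2
    linarith
  refine ⟨σ', ⟨hJn, ?_, ?_⟩, ?_⟩
  · -- injectivity
    intro i hi j hj hij
    simp only [Finset.mem_coe] at hi hj
    rw [hσ'eq i hi, hσ'eq j hj] at hij
    have h13 := hginj hij
    have h14 : f (ψ i hi) = f (ψ j hj) := by rw [h13]
    rw [hfψ i hi, hfψ j hj] at h14
    exact h14
  · -- slot conditions
    intro i hi
    have hmem : σ' i ∈ S := by rw [hσ'eq i hi]; exact hgS _
    obtain ⟨j, hjJ, hj⟩ := Finset.mem_image.mp hmem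
    have hc := hcond j hjJ
    refine ⟨by rw [← hj]; exact hc.1, by rw [← hj]; exact hc.2.1,
      by rw [← hj]; exact hc.1, by rw [← hj]; exact hc.2.1, ?_⟩
    rw [hσ'eq i hi]
    have := hkey (ψ i hi)
    rwa [hfψ i hi] at this
  · -- sortedness
    intro i hi j hj hlt
    rw [hσ'eq i hi, hσ'eq j hj] at hlt
    have h15 : ψ i hi ≤ ψ j hj := le_of_lt (hgmono.lt_iff_lt.mp hlt)
    have h16 : e (f (ψ i hi)) ≤ e (f (ψ j hj)) := hmono h15
    rwa [hfψ i hi, hfψ j hj] at h16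
end

section
/- Suppose all jobs have identical release times r_i = 1 and due dates d_i = T, the jobs are indexed so that e_1 ≤ … ≤ e_n, all energy requirements e_1, …, e_n are pairwise distinct, and all harvest values h_1, …, h_T are pairwise distinct. For each j for which a feasible schedule of {1,…,j} exists, let S_j denote the unique feasible schedule with J(S_j) = {1,…,j}, scheduling jobs in non-decreasing order of energy requirement, that maximizes E_S(T+1). Then for every i > 1 such that S_i is defined, the set of time slots used by S_{i−1} is a subset of the set of time slots used by S_i; that is, π_{S_{i−1}}(J(S_{i−1})) ⊆ π_{S_i}(J(S_i)). -/
/-- A schedule `(J, σ)` executes its jobs in non-decreasing order of energy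
requirement. -/
def SortedByEnergy (e : ℕ → ℤ) (J : Finset ℕ) (σ : ℕ → ℕ) : Prop :=
  ∀ i ∈ J, ∀ j ∈ J, σ i < σ j → e i ≤ e j

/-- `(Finset.Icc 1 j, σ)` is the schedule `S_j`: the feasible schedule of jobs
`{1,…,j}`, executing its jobs in non-decreasing order of energy requirement,
that maximizes the available energy `E_S(T+1)` among all such schedules. -/
def IsMaxEnergySched (n T : ℕ) (e h : ℕ → ℤ) (j : ℕ) (σ : ℕ → ℕ) : Prop :=
  IsFeasible n T (fun _ => 1) (fun _ => T) e h (Finset.Icc 1 j) σ ∧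
    SortedByEnergy e (Finset.Icc 1 j) σ ∧
    ∀ σ' : ℕ → ℕ,
      IsFeasible n T (fun _ => 1) (fun _ => T) e h (Finset.Icc 1 j) σ' →
      SortedByEnergy e (Finset.Icc 1 j) σ' →
      energyBefore e h (Finset.Icc 1 j) σ' (T + 1) ≤
        energyBefore e h (Finset.Icc 1 j) σ (T + 1)

namespace EASaux

open Finset
open scoped Classical

/-- Total harvest strictly before slot `u`. -/
def Hsum (h : ℕ → ℤ) (u : ℕ) : ℤ := ∑ τ ∈ Finset.Icc 1 (u - 1), h τ

/-- Total energy requirement of the first `k` jobs. -/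
def Esum (e : ℕ → ℤ) (k : ℕ) : ℤ := ∑ l ∈ Finset.Icc 1 k, e l

/-- Total harvest over a set of slots. -/
def cost (h : ℕ → ℤ) (S : Finset ℕ) : ℤ := ∑ s ∈ S, h s

/-- Pointwise (set-level) feasibility of a slot set. -/
def Feas (T : ℕ) (e h : ℕ → ℤ) (S : Finset ℕ) : Prop :=
  S ⊆ Finset.Icc 1 T ∧ ∀ u ∈ Finset.Icc 1 T,
    Esum e (S.filter (fun x => x ≤ u)).card + cost h (S.filter (fun x => x < u)) ≤ Hsum h u

/-- `S` is an optimal (minimum-cost) feasible slot set of size `j`. -/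
def OptSet (T : ℕ) (e h : ℕ → ℤ) (j : ℕ) (S : Finset ℕ) : Prop :=
  Feas T e h S ∧ S.card = j ∧
    ∀ S', Feas T e h S' → S'.card = j → cost h S ≤ cost h S'

/-- `σ` is strictly monotone on `{1,…,j}`. -/
def SMono (σ : ℕ → ℕ) (j : ℕ) : Prop :=
  ∀ a ∈ Finset.Icc 1 j, ∀ b ∈ Finset.Icc 1 j, a < b → σ a < σ b

/-- The rank-wise feasibility condition. -/
def CondR (T j : ℕ) (e h : ℕ → ℤ) (σ : ℕ → ℕ) : Prop :=
  ∀ i ∈ Finset.Icc 1 j, Esum e i + (∑ l ∈ Finset.Icc 1 (i - 1), h (σ l)) ≤ Hsum h (σ i)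

variable {T n j : ℕ} {e h : ℕ → ℤ} {σ : ℕ → ℕ}

lemma Esum_mono (he : ∀ i, 0 ≤ e i) {k l : ℕ} (hkl : k ≤ l) : Esum e k ≤ Esum e l := by
  apply Finset.sum_le_sum_of_subset_of_nonneg
  · exact Finset.Icc_subset_Icc_right hkl
  · intro i _ _; exact he i

lemma cost_mono (hh : ∀ t, 0 ≤ h t) {S S' : Finset ℕ} (hSS : S ⊆ S') :
    cost h S ≤ cost h S' :=
  Finset.sum_le_sum_of_subset_of_nonneg hSS (fun i _ _ => hh i)

lemma cost_erase {S : Finset ℕ} {b : ℕ} (hb : b ∈ S) :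
    cost h (S.erase b) = cost h S - h b := Finset.sum_erase_eq_sub hb

lemma cost_insert {S : Finset ℕ} {t : ℕ} (ht : t ∉ S) :
    cost h (insert t S) = h t + cost h S := Finset.sum_insert ht

lemma Hsum_nonneg (hh : ∀ t, 0 ≤ h t) (u : ℕ) : 0 ≤ Hsum h u :=
  Finset.sum_nonneg (fun i _ => hh i)

lemma Esum_zero : Esum e 0 = 0 := by simp [Esum]

lemma Esum_succ {k : ℕ} (hk : 1 ≤ k) : Esum e k = Esum e (k - 1) + e k := by
  unfold Esum
  have : Finset.Icc 1 k = insert k (Finset.Icc 1 (k - 1)) := by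
    ext x; simp [Finset.mem_Icc, Finset.mem_insert]; omega
  rw [this, Finset.sum_insert (by simp [Finset.mem_Icc]; omega)]
  ring

/-- L1: removing any slot preserves feasibility. -/
lemma Feas.erase (he : ∀ i, 0 ≤ e i) (hh : ∀ t, 0 ≤ h t)
    {S : Finset ℕ} (hS : Feas T e h S) (b : ℕ) : Feas T e h (S.erase b) := by
  refine ⟨(Finset.erase_subset _ _).trans hS.1, fun u hu => ?_⟩
  have h1 : (S.erase b).filter (fun x => x ≤ u) ⊆ S.filter (fun x => x ≤ u) :=
    Finset.filter_subset_filter _ (Finset.erase_subset _ _)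
  have h2 : (S.erase b).filter (fun x => x < u) ⊆ S.filter (fun x => x < u) :=
    Finset.filter_subset_filter _ (Finset.erase_subset _ _)
  calc Esum e ((S.erase b).filter (fun x => x ≤ u)).card
        + cost h ((S.erase b).filter (fun x => x < u))
      ≤ Esum e ((S.filter (fun x => x ≤ u)).card) + cost h (S.filter (fun x => x < u)) := by
        exact add_le_add (Esum_mono he (Finset.card_le_card h1)) (cost_mono hh h2)
    _ ≤ Hsum h u := hS.2 u hu

/-- L2: augmentation. If `A` is optimal of size `j-1` (expressed via the cost bound
`costbd`) and `B` is feasible with one more element, then inserting `t = max (B \ A)`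
into `A` keeps feasibility. -/
lemma Feas.insert_max (he : ∀ i, 0 ≤ e i) (hh : ∀ t, 0 ≤ h t)
    {A B : Finset ℕ} (hA : Feas T e h A) (hB : Feas T e h B)
    (hcard : A.card + 1 = B.card) {t : ℕ}
    (htB : t ∈ B) (htA : t ∉ A) (hmax : ∀ x ∈ B, x ∉ A → x ≤ t)
    (costbd : cost h A ≤ cost h B - h t) :
    Feas T e h (insert t A) := by
  constructor
  · exact Finset.insert_subset (hB.1 htB) hA.1
  intro u hu
  by_cases hut : u < t
  · -- same as A's condition at u
    have hle : (insert t A).filter (fun x => x ≤ u) = A.filter (fun x => x ≤ u) := by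
      rw [Finset.filter_insert]; simp [not_le.mpr, show ¬ t ≤ u by omega]
    have hlt : (insert t A).filter (fun x => x < u) = A.filter (fun x => x < u) := by
      rw [Finset.filter_insert]; simp [show ¬ t < u by omega]
    rw [hle, hlt]; exact hA.2 u hu
  · -- u ≥ t
    push_neg at hut
    -- counting: card of B-filter ≥ card of A-filter + 1
    have hsub : B.filter (fun x => ¬ x ≤ u) ⊆ A.filter (fun x => ¬ x ≤ u) := by
      intro x hx
      rw [Finset.mem_filter] at hx ⊢
      refine ⟨?_, hx.2⟩
      by_contra hxA
      exact hx.2 ((hmax x hx.1 hxA).trans hut)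
    have hcA := Finset.card_filter_add_card_filter_not (s := A) (p := fun x => x ≤ u)
    have hcB := Finset.card_filter_add_card_filter_not (s := B) (p := fun x => x ≤ u)
    have hcnt : (A.filter (fun x => x ≤ u)).card + 1 ≤ (B.filter (fun x => x ≤ u)).card := by
      have := Finset.card_le_card hsub
      omega
    have hle : (insert t A).filter (fun x => x ≤ u) = insert t (A.filter (fun x => x ≤ u)) := by
      rw [Finset.filter_insert, if_pos hut]
    have hcard_ins : ((insert t A).filter (fun x => x ≤ u)).card
        = (A.filter (fun x => x ≤ u)).card + 1 := by
      rw [hle, Finset.card_insert_of_notMem (fun hc => htA (Finset.mem_of_mem_filter _ hc))]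
    -- cost side
    have hBsplit : cost h (B.filter (fun x => x < u)) + cost h (B.filter (fun x => ¬ x < u))
        = cost h B := Finset.sum_filter_add_sum_filter_not B _ _
    have hAsplit : cost h (A.filter (fun x => x < u)) + cost h (A.filter (fun x => ¬ x < u))
        = cost h A := Finset.sum_filter_add_sum_filter_not A _ _
    have hEmono : Esum e (((insert t A).filter (fun x => x ≤ u)).card)
        ≤ Esum e ((B.filter (fun x => x ≤ u)).card) := by
      rw [hcard_ins]; exact Esum_mono he hcnt
    have hBfeas := hB.2 u hu
    by_cases hut' : t < u
    · -- strict: B.filter(¬·<u) ⊆ A.filter(¬·<u)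
      have hsub2 : B.filter (fun x => ¬ x < u) ⊆ A.filter (fun x => ¬ x < u) := by
        intro x hx
        rw [Finset.mem_filter] at hx ⊢
        refine ⟨?_, hx.2⟩
        by_contra hxA
        exact hx.2 (lt_of_le_of_lt (hmax x hx.1 hxA) hut')
      have hcost2 : cost h (B.filter (fun x => ¬ x < u)) ≤ cost h (A.filter (fun x => ¬ x < u)) :=
        cost_mono hh hsub2
      have hlt : (insert t A).filter (fun x => x < u) = insert t (A.filter (fun x => x < u)) := by
        rw [Finset.filter_insert, if_pos hut']
      have hcost_ins : cost h ((insert t A).filter (fun x => x < u))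
          = h t + cost h (A.filter (fun x => x < u)) := by
        rw [hlt, cost, Finset.sum_insert (fun hc => htA (Finset.mem_of_mem_filter _ hc))]; rfl
      have key : cost h ((insert t A).filter (fun x => x < u))
          ≤ cost h (B.filter (fun x => x < u)) := by
        rw [hcost_ins]; linarith
      linarith
    · -- u = t
      have hut2 : u = t := by omega
      have hsub2 : B.filter (fun x => ¬ x < u) ⊆ insert t (A.filter (fun x => ¬ x < u)) := by
        intro x hx
        rw [Finset.mem_filter] at hx
        rcases eq_or_ne x t with rfl | hxt
        · exact Finset.mem_insert_self _ _
        · apply Finset.mem_insert_of_mem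
          rw [Finset.mem_filter]
          refine ⟨?_, hx.2⟩
          by_contra hxA
          have := hmax x hx.1 hxA
          omega
      have hcost2 : cost h (B.filter (fun x => ¬ x < u))
          ≤ h t + cost h (A.filter (fun x => ¬ x < u)) := by
        calc cost h (B.filter (fun x => ¬ x < u))
            ≤ cost h (insert t (A.filter (fun x => ¬ x < u))) := cost_mono hh hsub2
          _ = h t + cost h (A.filter (fun x => ¬ x < u)) := by
              rw [cost, Finset.sum_insert (fun hc => htA (Finset.mem_of_mem_filter _ hc))]; rfl
      have hlt : (insert t A).filter (fun x => x < u) = A.filter (fun x => x < u) := by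
        rw [Finset.filter_insert, if_neg (by omega)]
      rw [hlt]
      linarith

lemma SMono.le (hs : SMono σ j) {a b : ℕ} (ha : a ∈ Finset.Icc 1 j)
    (hb : b ∈ Finset.Icc 1 j) (hab : a ≤ b) : σ a ≤ σ b := by
  rcases eq_or_lt_of_le hab with rfl | hlt
  · exact le_rfl
  · exact (hs a ha b hb hlt).le

lemma SMono.lt_iff (hs : SMono σ j) {a b : ℕ} (ha : a ∈ Finset.Icc 1 j)
    (hb : b ∈ Finset.Icc 1 j) : σ a < σ b ↔ a < b := by
  constructor
  · intro hlt
    by_contra hab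
    exact absurd (hs.le hb ha (not_lt.mp hab)) (not_le.mpr hlt)
  · exact hs a ha b hb

lemma SMono.injOn (hs : SMono σ j) : Set.InjOn σ ↑(Finset.Icc 1 j) := by
  intro a ha b hb hab
  simp only [Finset.coe_Icc, Set.mem_Icc] at ha hb
  by_contra hne
  rcases lt_or_gt_of_ne hne with hlt | hgt
  · exact absurd hab (hs a (Finset.mem_Icc.mpr ha) b (Finset.mem_Icc.mpr hb) hlt).ne
  · exact absurd hab.symm (hs b (Finset.mem_Icc.mpr hb) a (Finset.mem_Icc.mpr ha) hgt).ne

lemma filter_lt_rank (hs : SMono σ j) {i : ℕ} (hi : i ∈ Finset.Icc 1 j) :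
    (Finset.Icc 1 j).filter (fun l => σ l < σ i) = Finset.Icc 1 (i - 1) := by
  rw [Finset.mem_Icc] at hi
  ext l
  rw [Finset.mem_filter, Finset.mem_Icc, Finset.mem_Icc]
  constructor
  · rintro ⟨⟨h1, h2⟩, hlt⟩
    have : l < i := (hs.lt_iff (Finset.mem_Icc.mpr ⟨h1, h2⟩) (Finset.mem_Icc.mpr hi)).mp hlt
    omega
  · rintro ⟨h1, h2⟩
    have hl : l ∈ Finset.Icc 1 j := Finset.mem_Icc.mpr ⟨h1, by omega⟩
    exact ⟨Finset.mem_Icc.mp hl, hs l hl i (Finset.mem_Icc.mpr hi) (by omega)⟩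

/-- A downward-closed subset of `{1,…,j}` is an initial segment. -/
lemma downset_eq_Icc {I : Finset ℕ} (hIj : ∀ x ∈ I, 1 ≤ x)
    (hdc : ∀ x ∈ I, ∀ y, 1 ≤ y → y ≤ x → y ∈ I) : I = Finset.Icc 1 I.card := by
  rcases I.eq_empty_or_nonempty with rfl | hne
  · simp
  · have hM : I = Finset.Icc 1 (I.max' hne) := by
      apply Finset.Subset.antisymm
      · intro x hx
        exact Finset.mem_Icc.mpr ⟨hIj x hx, Finset.le_max' _ _ hx⟩
      · intro y hy
        rw [Finset.mem_Icc] at hy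
        exact hdc _ (I.max'_mem hne) y hy.1 hy.2
    have hc : I.card = I.max' hne := by
      conv_lhs => rw [hM]
      rw [Nat.card_Icc]; omega
    rw [show Finset.Icc 1 I.card = Finset.Icc 1 (I.max' hne) from by rw [hc]]
    exact hM

/-- The value of `energyBefore` at the slot of job `i`, for a strictly monotone
schedule. -/
lemma energyBefore_rank (hs : SMono σ j) {i : ℕ} (hi : i ∈ Finset.Icc 1 j) :
    energyBefore e h (Finset.Icc 1 j) σ (σ i)
      = Hsum h (σ i) - (Esum e (i - 1) + ∑ l ∈ Finset.Icc 1 (i - 1), h (σ l)) := by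
  unfold energyBefore
  rw [filter_lt_rank hs hi, Finset.sum_add_distrib]
  unfold Hsum Esum
  ring

/-- Main correspondence: rank-wise feasibility together with strict monotonicity
gives set-level (pointwise) feasibility of the image. -/
lemma feas_image (he : ∀ i, 0 ≤ e i) (hh : ∀ t, 0 ≤ h t)
    (hs : SMono σ j) (hrange : ∀ i ∈ Finset.Icc 1 j, σ i ∈ Finset.Icc 1 T)
    (hcond : CondR T j e h σ) : Feas T e h ((Finset.Icc 1 j).image σ) := by
  constructor
  · intro s hsmem
    obtain ⟨i, hi, rfl⟩ := Finset.mem_image.mp hsmem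
    exact hrange i hi
  intro u hu
  set S := (Finset.Icc 1 j).image σ with hS
  set F := (Finset.Icc 1 j).filter (fun l => σ l ≤ u) with hF
  set G := (Finset.Icc 1 j).filter (fun l => σ l < u) with hG
  have hFdc : F = Finset.Icc 1 F.card := by
    apply downset_eq_Icc
    · intro x hx; exact (Finset.mem_Icc.mp (Finset.mem_of_mem_filter _ hx)).1
    · intro x hx y h1 h2
      rw [Finset.mem_filter] at hx ⊢
      have hy : y ∈ Finset.Icc 1 j := Finset.mem_Icc.mpr
        ⟨h1, h2.trans (Finset.mem_Icc.mp hx.1).2⟩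
      exact ⟨hy, (hs.le hy hx.1 h2).trans hx.2⟩
  have hGdc : G = Finset.Icc 1 G.card := by
    apply downset_eq_Icc
    · intro x hx; exact (Finset.mem_Icc.mp (Finset.mem_of_mem_filter _ hx)).1
    · intro x hx y h1 h2
      rw [Finset.mem_filter] at hx ⊢
      have hy : y ∈ Finset.Icc 1 j := Finset.mem_Icc.mpr
        ⟨h1, h2.trans (Finset.mem_Icc.mp hx.1).2⟩
      exact ⟨hy, lt_of_le_of_lt (hs.le hy hx.1 h2) hx.2⟩
  -- image filters
  have hSle : S.filter (fun x => x ≤ u) = F.image σ := by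
    rw [hS, Finset.filter_image]
  have hSlt : S.filter (fun x => x < u) = G.image σ := by
    rw [hS, Finset.filter_image]
  have hcardF : (S.filter (fun x => x ≤ u)).card = F.card := by
    rw [hSle]
    exact Finset.card_image_of_injOn (hs.injOn.mono (by
      intro x hx; exact Finset.mem_coe.mpr (Finset.mem_of_mem_filter _ (Finset.mem_coe.mp hx))))
  have hcostG : cost h (S.filter (fun x => x < u)) = ∑ l ∈ G, h (σ l) := by
    rw [hSlt]
    exact Finset.sum_image (fun a ha b hb hab => hs.injOn
      (Finset.mem_coe.mpr (Finset.mem_of_mem_filter _ ha))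
      (Finset.mem_coe.mpr (Finset.mem_of_mem_filter _ hb)) hab)
  rw [hcardF, hcostG]
  set K := F.card with hK
  rcases Nat.eq_zero_or_pos K with hK0 | hKpos
  · -- empty case
    have hFe : F = ∅ := Finset.card_eq_zero.mp hK0
    have hGe : G = ∅ := by
      apply Finset.eq_empty_of_forall_notMem
      intro x hx
      rw [Finset.mem_filter] at hx
      have : x ∈ F := by
        rw [hF, Finset.mem_filter]; exact ⟨hx.1, hx.2.le⟩
      rw [hFe] at this; exact absurd this (Finset.notMem_empty x)
    rw [hK0, hGe, Esum_zero]
    simpa using Hsum_nonneg hh u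
  · -- K ≥ 1 : use rank-wise condition at job K
    have hKmem : K ∈ F := by rw [hFdc]; exact Finset.mem_Icc.mpr ⟨hKpos, le_rfl⟩
    rw [Finset.mem_filter] at hKmem
    obtain ⟨hKIcc, hKu⟩ := hKmem
    have hcondK := hcond K hKIcc
    have hGsub : Finset.Icc 1 (K - 1) ⊆ G := by
      intro l hl
      rw [Finset.mem_Icc] at hl
      have hlIcc : l ∈ Finset.Icc 1 j := Finset.mem_Icc.mpr
        ⟨hl.1, by have := (Finset.mem_Icc.mp hKIcc).2; omega⟩
      rw [hG, Finset.mem_filter]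
      exact ⟨hlIcc, lt_of_lt_of_le (hs l hlIcc K hKIcc (by omega)) hKu⟩
    have hGsub2 : G ⊆ F := by
      intro x hx
      rw [Finset.mem_filter] at hx ⊢
      exact ⟨hx.1, hx.2.le⟩
    by_cases hKlt : σ K < u
    · -- G = Icc 1 K
      have hKG : K ∈ G := by rw [hG, Finset.mem_filter]; exact ⟨hKIcc, hKlt⟩
      have hGcard : G.card = K := le_antisymm (Finset.card_le_card hGsub2) (by
        have := Finset.card_le_card hGsub
        rw [Nat.card_Icc] at this
        have hKG' : K ≤ G.card := by
          have : Finset.Icc 1 K ⊆ G := by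
            intro l hl
            rw [Finset.mem_Icc] at hl
            rcases Nat.eq_or_lt_of_le hl.2 with rfl | hlt
            · exact hKG
            · exact hGsub (Finset.mem_Icc.mpr ⟨hl.1, by omega⟩)
          have := Finset.card_le_card this
          rwa [Nat.card_Icc, Nat.add_sub_cancel] at this
        exact hKG')
      have hGeq : G = Finset.Icc 1 K := by rw [hGdc, hGcard]
      have hsplit : ∑ l ∈ G, h (σ l) = (∑ l ∈ Finset.Icc 1 (K - 1), h (σ l)) + h (σ K) := by
        rw [hGeq]
        have : Finset.Icc 1 K = insert K (Finset.Icc 1 (K - 1)) := by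
          ext x; simp only [Finset.mem_Icc, Finset.mem_insert]; omega
        rw [this, Finset.sum_insert (by simp [Finset.mem_Icc]; omega)]
        ring
      -- Hsum (σ K) + h (σ K) ≤ Hsum u
      have hσK1 : 1 ≤ σ K := (Finset.mem_Icc.mp (hrange K hKIcc)).1
      have hHsum : Hsum h (σ K) + h (σ K) ≤ Hsum h u := by
        have hsub : Finset.Icc 1 (σ K) ⊆ Finset.Icc 1 (u - 1) :=
          Finset.Icc_subset_Icc_right (by omega)
        have h1 : ∑ τ ∈ Finset.Icc 1 (σ K), h τ ≤ Hsum h u :=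
          Finset.sum_le_sum_of_subset_of_nonneg hsub (fun i _ _ => hh i)
        have h2 : ∑ τ ∈ Finset.Icc 1 (σ K), h τ = Hsum h (σ K) + h (σ K) := by
          unfold Hsum
          have : Finset.Icc 1 (σ K) = insert (σ K) (Finset.Icc 1 (σ K - 1)) := by
            ext x; simp only [Finset.mem_Icc, Finset.mem_insert]; omega
          rw [this, Finset.sum_insert (by simp [Finset.mem_Icc]; omega)]
          ring
        linarith
      rw [hsplit]
      have : Esum e K + ∑ l ∈ Finset.Icc 1 (K - 1), h (σ l) ≤ Hsum h (σ K) := hcondK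
      linarith
    · -- σ K = u, G = Icc 1 (K-1)
      have hKu' : σ K = u := le_antisymm hKu (not_lt.mp hKlt)
      have hGcard : G.card = K - 1 := by
        have hle : G.card ≤ K := Finset.card_le_card hGsub2
        have hge : K - 1 ≤ G.card := by
          have := Finset.card_le_card hGsub
          rwa [Nat.card_Icc, Nat.add_sub_cancel] at this
        have hKnotG : K ∉ G := by
          rw [hG, Finset.mem_filter]
          rintro ⟨-, hc⟩
          omega
        have : G.card ≠ K := by
          intro hc
          apply hKnotG
          rw [hGdc, hc]
          exact Finset.mem_Icc.mpr ⟨hKpos, le_rfl⟩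
        omega
      have hGeq : G = Finset.Icc 1 (K - 1) := by rw [hGdc, hGcard]
      rw [hGeq, ← hKu']
      exact hcondK


lemma filter_le_rank (hs : SMono σ j) {i : ℕ} (hi : i ∈ Finset.Icc 1 j) :
    (Finset.Icc 1 j).filter (fun l => σ l ≤ σ i) = Finset.Icc 1 i := by
  have hi' := Finset.mem_Icc.mp hi
  ext l
  rw [Finset.mem_filter, Finset.mem_Icc, Finset.mem_Icc]
  constructor
  · rintro ⟨⟨h1, h2⟩, hle⟩
    refine ⟨h1, ?_⟩
    by_contra hc
    have : σ i < σ l := hs i hi l (Finset.mem_Icc.mpr ⟨h1, h2⟩) (by omega)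
    omega
  · rintro ⟨h1, h2⟩
    have hl : l ∈ Finset.Icc 1 j := Finset.mem_Icc.mpr ⟨h1, by omega⟩
    exact ⟨Finset.mem_Icc.mp hl, hs.le hl hi h2⟩

/-- The set-level feasibility implies the rank-wise condition. -/
lemma condR_of_feas (hs : SMono σ j)
    (hrange : ∀ i ∈ Finset.Icc 1 j, σ i ∈ Finset.Icc 1 T)
    (hfeas : Feas T e h ((Finset.Icc 1 j).image σ)) : CondR T j e h σ := by
  intro i hi
  set S := (Finset.Icc 1 j).image σ with hS
  have hcond := hfeas.2 (σ i) (hrange i hi)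
  have hSle : S.filter (fun x => x ≤ σ i) = (Finset.Icc 1 i).image σ := by
    rw [hS, Finset.filter_image, filter_le_rank hs hi]
  have hSlt : S.filter (fun x => x < σ i) = (Finset.Icc 1 (i - 1)).image σ := by
    rw [hS, Finset.filter_image, filter_lt_rank hs hi]
  have hi' := Finset.mem_Icc.mp hi
  have hsub1 : (Finset.Icc 1 i : Finset ℕ) ⊆ Finset.Icc 1 j :=
    Finset.Icc_subset_Icc_right hi'.2
  have hsub2 : (Finset.Icc 1 (i - 1) : Finset ℕ) ⊆ Finset.Icc 1 j :=
    Finset.Icc_subset_Icc_right (by omega)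
  have hcard : (S.filter (fun x => x ≤ σ i)).card = i := by
    rw [hSle, Finset.card_image_of_injOn (hs.injOn.mono (by exact_mod_cast hsub1)),
      Nat.card_Icc]
    omega
  have hcost : cost h (S.filter (fun x => x < σ i)) = ∑ l ∈ Finset.Icc 1 (i - 1), h (σ l) := by
    rw [hSlt]
    exact Finset.sum_image (fun a ha b hb hab =>
      hs.injOn (hsub2 ha) (hsub2 hb) hab)
  rw [hcard, hcost] at hcond
  exact hcond

/-- The final energy in terms of set cost. -/
lemma energyBefore_final (hrange : ∀ i ∈ Finset.Icc 1 j, σ i ≤ T)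
    (hinj : Set.InjOn σ ↑(Finset.Icc 1 j)) :
    energyBefore e h (Finset.Icc 1 j) σ (T + 1)
      = Hsum h (T + 1) - (Esum e j + cost h ((Finset.Icc 1 j).image σ)) := by
  unfold energyBefore Hsum
  have hfil : (Finset.Icc 1 j).filter (fun i => σ i < T + 1) = Finset.Icc 1 j := by
    apply Finset.filter_true_of_mem
    intro x hx
    exact Nat.lt_succ_of_le (hrange x hx)
  rw [hfil, Finset.sum_add_distrib]
  have hcost : cost h ((Finset.Icc 1 j).image σ) = ∑ i ∈ Finset.Icc 1 j, h (σ i) :=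
    Finset.sum_image (fun a ha b hb hab => hinj ha hb hab)
  rw [hcost]
  unfold Esum
  ring

/-- From a maximal schedule to an optimal slot set. -/
lemma toOpt (he : ∀ i, 0 ≤ e i) (hh : ∀ t, 0 ≤ h t)
    (hmono : ∀ i j, 1 ≤ i → i < j → j ≤ n → e i < e j)
    (hjn : j ≤ n) {σ : ℕ → ℕ} (hσ : IsMaxEnergySched n T e h j σ) :
    OptSet T e h j ((Finset.Icc 1 j).image σ) := by
  obtain ⟨⟨hsub, hinj, hjobs⟩, hsort, hmax⟩ := hσ
  -- strict monotonicity
  have hs : SMono σ j := by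
    intro a ha b hb hab
    have ha' := Finset.mem_Icc.mp ha
    have hb' := Finset.mem_Icc.mp hb
    have heab : e a < e b := hmono a b ha'.1 hab (hb'.2.trans hjn)
    rcases lt_trichotomy (σ a) (σ b) with hlt | heq | hgt
    · exact hlt
    · exact absurd (hinj ha hb heq) (by omega)
    · exact absurd (hsort b hb a ha hgt) (by omega)
  have hrange : ∀ i ∈ Finset.Icc 1 j, σ i ∈ Finset.Icc 1 T := by
    intro i hi
    obtain ⟨h1, h2, -⟩ := hjobs i hi
    exact Finset.mem_Icc.mpr ⟨h1, h2⟩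
  have hcond : CondR T j e h σ := by
    intro i hi
    obtain ⟨-, -, -, -, hE⟩ := hjobs i hi
    rw [energyBefore_rank hs hi] at hE
    have h1 := (Finset.mem_Icc.mp hi).1
    rw [Esum_succ (e := e) h1]
    linarith
  have hfeas : Feas T e h ((Finset.Icc 1 j).image σ) := feas_image he hh hs hrange hcond
  have hcard : ((Finset.Icc 1 j).image σ).card = j := by
    rw [Finset.card_image_of_injOn hinj, Nat.card_Icc]
    omega
  refine ⟨hfeas, hcard, ?_⟩
  -- optimality: any feasible set gives a schedule
  intro S' hS' hS'c
  -- construct σ' from S'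
  obtain ⟨σ', hσ'eq⟩ : ∃ σ' : ℕ → ℕ, ∀ i, ∀ (h1 : 1 ≤ i) (h2 : i ≤ j),
      σ' i = S'.orderEmbOfFin hS'c ⟨i - 1, by omega⟩ :=
    ⟨fun i => if hi : 1 ≤ i ∧ i ≤ j then S'.orderEmbOfFin hS'c ⟨i - 1, by omega⟩ else 0,
      fun i h1 h2 => dif_pos ⟨h1, h2⟩⟩
  have hs' : SMono σ' j := by
    intro a ha b hb hab
    have ha' := Finset.mem_Icc.mp ha
    have hb' := Finset.mem_Icc.mp hb
    rw [hσ'eq a ha'.1 ha'.2, hσ'eq b hb'.1 hb'.2]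
    apply (S'.orderEmbOfFin hS'c).strictMono
    simp only [Fin.mk_lt_mk]
    omega
  have hmem' : ∀ i ∈ Finset.Icc 1 j, σ' i ∈ S' := by
    intro i hi
    have hi' := Finset.mem_Icc.mp hi
    rw [hσ'eq i hi'.1 hi'.2]
    exact Finset.orderEmbOfFin_mem S' hS'c _
  have hrange' : ∀ i ∈ Finset.Icc 1 j, σ' i ∈ Finset.Icc 1 T := fun i hi =>
    hS'.1 (hmem' i hi)
  have himage : (Finset.Icc 1 j).image σ' = S' := by
    apply Finset.eq_of_subset_of_card_le
    · intro s hsm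
      obtain ⟨i, hi, rfl⟩ := Finset.mem_image.mp hsm
      exact hmem' i hi
    · rw [hS'c, Finset.card_image_of_injOn hs'.injOn, Nat.card_Icc]; omega
  have hcond' : CondR T j e h σ' := by
    apply condR_of_feas hs' hrange'
    rw [himage]
    exact hS'
  have hfeas' : IsFeasible n T (fun _ => 1) (fun _ => T) e h (Finset.Icc 1 j) σ' := by
    refine ⟨Finset.Icc_subset_Icc_right hjn, hs'.injOn, ?_⟩
    intro i hi
    have hiT := Finset.mem_Icc.mp (hrange' i hi)
    refine ⟨hiT.1, hiT.2, hiT.1, hiT.2, ?_⟩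
    rw [energyBefore_rank hs' hi]
    have hcd := hcond' i hi
    have h1 := (Finset.mem_Icc.mp hi).1
    rw [Esum_succ (e := e) h1] at hcd
    linarith
  have hsort' : SortedByEnergy e (Finset.Icc 1 j) σ' := by
    intro a ha b hb hab
    have ha' := Finset.mem_Icc.mp ha
    have hb' := Finset.mem_Icc.mp hb
    have : a < b := (hs'.lt_iff ha hb).mp hab
    exact (hmono a b ha'.1 this (hb'.2.trans hjn)).le
  have hcomp := hmax σ' hfeas' hsort'
  rw [energyBefore_final (fun i hi => (Finset.mem_Icc.mp (hrange i hi)).2) hinj,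
    energyBefore_final (fun i hi => (Finset.mem_Icc.mp (hrange' i hi)).2) hs'.injOn,
    himage] at hcomp
  linarith


/-- The exchange step: from an optimal `j`-set `A` and an optimal `(j+1)`-set `B`,
the slot `t = max (B \ A)` satisfies: `B.erase t` is optimal of size `j` and
`cost B = cost A + h t`. -/
lemma step (he : ∀ i, 0 ≤ e i) (hh : ∀ t, 0 ≤ h t) {j : ℕ} {A B : Finset ℕ}
    (hA : OptSet T e h j A) (hB : OptSet T e h (j + 1) B) :
    ∃ t ∈ B, t ∉ A ∧ OptSet T e h j (B.erase t) ∧ cost h B = cost h A + h t := by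
  obtain ⟨hAf, hAc, hAmin⟩ := hA
  obtain ⟨hBf, hBc, hBmin⟩ := hB
  have hne : (B \ A).Nonempty := by
    rw [Finset.sdiff_nonempty]
    intro hsub
    have := Finset.card_le_card hsub
    omega
  set t := (B \ A).max' hne with ht
  have htmem : t ∈ B \ A := Finset.max'_mem _ hne
  have htB : t ∈ B := (Finset.mem_sdiff.mp htmem).1
  have htA : t ∉ A := (Finset.mem_sdiff.mp htmem).2
  have hmax : ∀ x ∈ B, x ∉ A → x ≤ t := fun x hxB hxA =>
    Finset.le_max' _ x (Finset.mem_sdiff.mpr ⟨hxB, hxA⟩)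
  have herase : Feas T e h (B.erase t) := Feas.erase he hh hBf t
  have herasec : (B.erase t).card = j := by
    rw [Finset.card_erase_of_mem htB]; omega
  have hcost1 : cost h A ≤ cost h B - h t := by
    have := hAmin (B.erase t) herase herasec
    rw [cost_erase htB] at this
    linarith
  have hins : Feas T e h (insert t A) :=
    Feas.insert_max he hh hAf hBf (by omega) htB htA hmax hcost1
  have hinsc : (insert t A).card = j + 1 := by
    rw [Finset.card_insert_of_notMem htA]; omega
  have hcost2 : cost h B ≤ cost h A + h t := by
    have := hBmin (insert t A) hins hinsc
    rw [cost_insert htA] at this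
    linarith
  have hcosteq : cost h B = cost h A + h t := le_antisymm hcost2 (by linarith)
  refine ⟨t, htB, htA, ⟨herase, herasec, fun S' hS' hS'c => ?_⟩, hcosteq⟩
  rw [cost_erase htB]
  have := hAmin S' hS' hS'c
  linarith

/-- Uniqueness of optimal slot sets, by induction on the size. -/
lemma opt_unique (he : ∀ i, 0 ≤ e i) (hh : ∀ t, 0 ≤ h t)
    (hdist : ∀ s t, 1 ≤ s → s < t → t ≤ T → h s ≠ h t) :
    ∀ j : ℕ, ∀ A B : Finset ℕ, OptSet T e h j A → OptSet T e h j B → A = B := by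
  intro j
  induction j with
  | zero =>
    intro A B hA hB
    rw [Finset.card_eq_zero.mp hA.2.1, Finset.card_eq_zero.mp hB.2.1]
  | succ j ih =>
    intro B B' hB hB'
    -- get an optimal j-set
    have hBne : B.Nonempty := Finset.card_pos.mp (by rw [hB.2.1]; omega)
    obtain ⟨b0, hb0⟩ := hBne
    have hcand : (B.erase b0) ∈ (Finset.Icc 1 T).powerset.filter
        (fun S => Feas T e h S ∧ S.card = j) := by
      rw [Finset.mem_filter, Finset.mem_powerset]
      have hf := Feas.erase he hh hB.1 b0
      exact ⟨hf.1, hf, by rw [Finset.card_erase_of_mem hb0, hB.2.1]; omega⟩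
    obtain ⟨A, hAmem, hAmin⟩ := Finset.exists_min_image _ (cost h) ⟨_, hcand⟩
    rw [Finset.mem_filter, Finset.mem_powerset] at hAmem
    have hAopt : OptSet T e h j A := by
      refine ⟨hAmem.2.1, hAmem.2.2, fun S' hS' hS'c => ?_⟩
      exact hAmin S' (by rw [Finset.mem_filter, Finset.mem_powerset]; exact ⟨hS'.1, hS', hS'c⟩)
    obtain ⟨t, htB, htA, hopt, hcost⟩ := step he hh hAopt hB
    obtain ⟨t', htB', htA', hopt', hcost'⟩ := step he hh hAopt hB'
    have hBA : B.erase t = A := ih _ _ hopt hAopt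
    have hBA' : B'.erase t' = A := ih _ _ hopt' hAopt
    have hcosteq : cost h B = cost h B' :=
      le_antisymm (hB.2.2 B' hB'.1 hB'.2.1) (hB'.2.2 B hB.1 hB.2.1)
    have hht : h t = h t' := by rw [hcost, hcost'] at hcosteq; linarith
    have htIcc : t ∈ Finset.Icc 1 T := hB.1.1 htB
    have htIcc' : t' ∈ Finset.Icc 1 T := hB'.1.1 htB'
    rw [Finset.mem_Icc] at htIcc htIcc'
    have htt : t = t' := by
      rcases lt_trichotomy t t' with hlt | heq | hgt
      · exact absurd hht (hdist t t' htIcc.1 hlt htIcc'.2)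
      · exact heq
      · exact absurd hht.symm (hdist t' t htIcc'.1 hgt htIcc.2)
    calc B = insert t (B.erase t) := (Finset.insert_erase htB).symm
      _ = insert t' (B'.erase t') := by rw [hBA, htt, hBA']
      _ = B' := Finset.insert_erase htB'

/-- Nesting of optimal slot sets. -/
lemma opt_nested (he : ∀ i, 0 ≤ e i) (hh : ∀ t, 0 ≤ h t)
    (hdist : ∀ s t, 1 ≤ s → s < t → t ≤ T → h s ≠ h t)
    {j : ℕ} {A B : Finset ℕ} (hA : OptSet T e h j A) (hB : OptSet T e h (j + 1) B) :
    A ⊆ B := by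
  obtain ⟨t, htB, htA, hopt, hcost⟩ := step he hh hA hB
  have : B.erase t = A := opt_unique he hh hdist j _ _ hopt hA
  rw [← this]
  exact Finset.erase_subset _ _


end EASaux

/-- With identical release times `1` and due dates `T`, strictly
increasing energy requirements and pairwise-distinct harvest values, whenever
`S_i` is defined (`i > 1`), the set of time slots used by `S_{i-1}` is contained
in the set of time slots used by `S_i`. -/
theorem slots_nested (n T : ℕ) (e h : ℕ → ℤ)
    (he : ∀ i, 0 ≤ e i) (hh : ∀ t, 0 ≤ h t)
    (hmono : ∀ i j, 1 ≤ i → i < j → j ≤ n → e i < e j)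
    (hdist : ∀ s t, 1 ≤ s → s < t → t ≤ T → h s ≠ h t)
    (i : ℕ) (hi2 : 2 ≤ i) (hin : i ≤ n)
    (σprev σcur : ℕ → ℕ)
    (hprev : IsMaxEnergySched n T e h (i - 1) σprev)
    (hcur : IsMaxEnergySched n T e h i σcur) :
    (Finset.Icc 1 (i - 1)).image σprev ⊆ (Finset.Icc 1 i).image σcur := by
  have hA : EASaux.OptSet T e h (i - 1) ((Finset.Icc 1 (i - 1)).image σprev) :=
    EASaux.toOpt he hh hmono (by omega) hprev
  have hB : EASaux.OptSet T e h i ((Finset.Icc 1 i).image σcur) :=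
    EASaux.toOpt he hh hmono hin hcur
  have hB' : EASaux.OptSet T e h ((i - 1) + 1) ((Finset.Icc 1 i).image σcur) := by
    rwa [show (i - 1) + 1 = i by omega]
  exact EASaux.opt_nested he hh hdist hA hB'
end

section
/- Let O be a feasible schedule of maximum cardinality, with |J(O)| = m, and let (J^g_1, t_1), …, (J^g_x, t_x) be a greedy sequence for the instance. Then for every ℓ ∈ {0, 1, …, x} there exists a feasible schedule S such that: (i) |J(S)| ≥ max{ℓ, m − ℓ}; (ii) {J^g_1, …, J^g_ℓ} ⊆ J(S) and π_S(J^g_i) = t_i for every i ∈ {1,…,ℓ}; and (iii) J(S) ∖ {J^g_1, …, J^g_ℓ} ⊆ J(O). -/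
/-- `(g, σ)` is a greedy sequence of length `x`: `g 1, …, g x` are the (pairwise
distinct) jobs scheduled by the greedy algorithm, in order, and `σ (g ℓ)` is the
(pairwise distinct) time slot assigned to job `g ℓ`.  For every `ℓ`, the partial
greedy schedule `G_ℓ` (jobs `g 1, …, g ℓ` at their slots) is feasible, and the
pair `(g ℓ, σ (g ℓ))` minimizes `e j + h t` over all pairs `(j, t)` of an
unscheduled job and an unused slot whose addition to `G_{ℓ-1}` keeps the
schedule feasible; moreover the sequence is maximal. -/
def GreedySeq (n T : ℕ) (r d : ℕ → ℕ) (e h : ℕ → ℤ)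
    (x : ℕ) (g σ : ℕ → ℕ) : Prop :=
  Set.InjOn g ↑(Finset.Icc 1 x) ∧
  (∀ ℓ, 1 ≤ ℓ → ℓ ≤ x →
    IsFeasible n T r d e h ((Finset.Icc 1 ℓ).image g) σ ∧
      ∀ j t : ℕ, j ∈ Finset.Icc 1 n → j ∉ (Finset.Icc 1 (ℓ - 1)).image g →
        t ∈ Finset.Icc 1 T → t ∉ ((Finset.Icc 1 (ℓ - 1)).image g).image σ →
        IsFeasible n T r d e h (insert j ((Finset.Icc 1 (ℓ - 1)).image g))
          (Function.update σ j t) →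
        e (g ℓ) + h (σ (g ℓ)) ≤ e j + h t) ∧
  (∀ j t : ℕ, j ∈ Finset.Icc 1 n → j ∉ (Finset.Icc 1 x).image g →
    t ∈ Finset.Icc 1 T → t ∉ ((Finset.Icc 1 x).image g).image σ →
    ¬ IsFeasible n T r d e h (insert j ((Finset.Icc 1 x).image g))
        (Function.update σ j t))

private lemma energy_congr (e h : ℕ → ℤ) (J : Finset ℕ) (σ₁ σ₂ : ℕ → ℕ) (t : ℕ)
    (hs : ∀ i ∈ J, σ₁ i = σ₂ i) :
    energyBefore e h J σ₁ t = energyBefore e h J σ₂ t := by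
  unfold energyBefore
  congr 1
  rw [Finset.filter_congr (fun i hi => by rw [hs i hi])]
  exact Finset.sum_congr rfl fun i hi => by rw [hs i (Finset.mem_of_mem_filter i hi)]

private lemma energy_mono (e h : ℕ → ℤ) (he : ∀ i, 0 ≤ e i) (hh : ∀ t, 0 ≤ h t)
    (J₁ J₂ : Finset ℕ) (σ₁ σ₂ : ℕ → ℕ) (t : ℕ)
    (h12 : J₁ ⊆ J₂) (hs : ∀ i ∈ J₁, σ₁ i = σ₂ i) :
    energyBefore e h J₂ σ₂ t ≤ energyBefore e h J₁ σ₁ t := by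
  rw [energy_congr e h J₁ σ₁ σ₂ t hs]
  unfold energyBefore
  apply sub_le_sub_left
  exact Finset.sum_le_sum_of_subset_of_nonneg (Finset.filter_subset_filter _ h12)
    (fun i _ _ => add_nonneg (he i) (hh _))

private lemma energy_erase (e h : ℕ → ℤ) (J : Finset ℕ) (σ : ℕ → ℕ) (w t : ℕ)
    (hw : w ∈ J) (hwt : σ w < t) :
    energyBefore e h (J.erase w) σ t = energyBefore e h J σ t + (e w + h (σ w)) := by
  unfold energyBefore
  have hmem : w ∈ J.filter (fun i => σ i < t) := Finset.mem_filter.2 ⟨hw, hwt⟩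
  rw [Finset.filter_erase, Finset.sum_erase_eq_sub hmem]
  ring

private lemma energy_insert (e h : ℕ → ℤ) (J : Finset ℕ) (σ : ℕ → ℕ) (j t : ℕ)
    (hj : j ∉ J) :
    energyBefore e h (insert j J) σ t
      = energyBefore e h J σ t - (if σ j < t then e j + h (σ j) else 0) := by
  unfold energyBefore
  rw [Finset.filter_insert]
  split
  · rw [Finset.sum_insert (fun hmem => hj (Finset.mem_of_mem_filter j hmem))]
    ring
  · ring

private lemma energy_nonneg (n T : ℕ) (r d : ℕ → ℕ) (e h : ℕ → ℤ)
    (he : ∀ i, 0 ≤ e i) (hh : ∀ t, 0 ≤ h t)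
    (J : Finset ℕ) (σ : ℕ → ℕ) (hS : IsFeasible n T r d e h J σ) :
    ∀ t, 0 ≤ energyBefore e h J σ t := by
  obtain ⟨-, hinj, hb⟩ := hS
  intro t
  induction t with
  | zero =>
    have h1 : Finset.Icc 1 0 = (∅ : Finset ℕ) := Finset.Icc_eq_empty (by omega)
    have h2 : J.filter (fun i => σ i < 0) = ∅ :=
      Finset.filter_false_of_mem (fun i _ => Nat.not_lt_zero _)
    simp [energyBefore, h1, h2]
  | succ t ih =>
    rcases Nat.eq_zero_or_pos t with rfl | hpos
    · have h1 : Finset.Icc 1 0 = (∅ : Finset ℕ) := Finset.Icc_eq_empty (by omega)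
      have h2 : J.filter (fun i => σ i < 1) = ∅ :=
        Finset.filter_false_of_mem (fun i hi => by have := (hb i hi).1; omega)
      unfold energyBefore
      rw [show (1:ℕ) - 1 = 0 from rfl, h1, h2]
      simp
    · have hIcc2 : Finset.Icc 1 t = insert t (Finset.Icc 1 (t - 1)) := by
        ext u; simp only [Finset.mem_Icc, Finset.mem_insert]; omega
      have hns : t ∉ Finset.Icc 1 (t - 1) := by simp only [Finset.mem_Icc]; omega
      have hfil : J.filter (fun i => σ i < t + 1)
          = J.filter (fun i => σ i < t) ∪ J.filter (fun i => σ i = t) := by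
        ext u
        simp only [Finset.mem_filter, Finset.mem_union]
        constructor
        · rintro ⟨hu, hlt⟩
          rcases Nat.lt_succ_iff_lt_or_eq.1 hlt with h' | h'
          exacts [Or.inl ⟨hu, h'⟩, Or.inr ⟨hu, h'⟩]
        · rintro (⟨hu, h'⟩ | ⟨hu, h'⟩) <;> exact ⟨hu, by omega⟩
      have hdisj : Disjoint (J.filter (fun i => σ i < t)) (J.filter (fun i => σ i = t)) := by
        rw [Finset.disjoint_left]
        intro u hu hu'
        have h1 := (Finset.mem_filter.1 hu).2
        have h2 := (Finset.mem_filter.1 hu').2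
        omega
      have hE : energyBefore e h J σ (t + 1)
          = energyBefore e h J σ t + h t
            - ∑ i ∈ J.filter (fun i => σ i = t), (e i + h (σ i)) := by
        unfold energyBefore
        rw [show t + 1 - 1 = t from rfl, hfil, Finset.sum_union hdisj, hIcc2,
          Finset.sum_insert hns]
        ring
      rcases Finset.eq_empty_or_nonempty (J.filter (fun i => σ i = t)) with hemp | ⟨u, hu⟩
      · rw [hE, hemp]
        simp only [Finset.sum_empty]
        have := hh t
        linarith
      · obtain ⟨huJ, hut⟩ := Finset.mem_filter.1 hu
        have hsing : J.filter (fun i => σ i = t) = {u} := by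
          apply Finset.eq_singleton_iff_unique_mem.2
          refine ⟨hu, fun v hv => ?_⟩
          obtain ⟨hvJ, hvt⟩ := Finset.mem_filter.1 hv
          exact hinj (Finset.mem_coe.2 hvJ) (Finset.mem_coe.2 huJ) (by rw [hvt, hut])
        rw [hE, hsing, Finset.sum_singleton, hut]
        have h1 : e u ≤ energyBefore e h J σ (σ u) := (hb u huJ).2.2.2.2
        rw [hut] at h1
        linarith

private lemma greedy_core (n T : ℕ) (r d : ℕ → ℕ) (e h : ℕ → ℤ)
    (he : ∀ i, 0 ≤ e i) (hh : ∀ t, 0 ≤ h t)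
    (x : ℕ) (g σ : ℕ → ℕ) (hgreedy : GreedySeq n T r d e h x g σ)
    (ℓ : ℕ) (hlx : ℓ + 1 ≤ x)
    (J : Finset ℕ) (σS : ℕ → ℕ) (hS : IsFeasible n T r d e h J σS)
    (hsub : (Finset.Icc 1 ℓ).image g ⊆ J)
    (hagree : ∀ i ∈ Finset.Icc 1 ℓ, σS (g i) = σ (g i))
    (w : ℕ) (hwGl : w ∉ (Finset.Icc 1 ℓ).image g)
    (hsc : (w ∈ J ∧ σS w = σ (g (ℓ+1))) ∨
        ((∀ v ∈ J, σS v ≠ σ (g (ℓ+1))) ∧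
          ∀ a ∈ J, a ∉ (Finset.Icc 1 ℓ).image g → w ∈ J ∧ σS w ≤ σS a)) :
    ∃ J' σ', IsFeasible n T r d e h J' σ' ∧ J.card ≤ J'.card + 1 ∧
      (Finset.Icc 1 (ℓ+1)).image g ⊆ J' ∧
      (∀ i ∈ Finset.Icc 1 (ℓ+1), σ' (g i) = σ (g i)) ∧
      J' \ (Finset.Icc 1 (ℓ+1)).image g ⊆ J \ (Finset.Icc 1 ℓ).image g := by
  obtain ⟨hginj, hiter, -⟩ := hgreedy
  obtain ⟨hG1, hmin0⟩ := hiter (ℓ+1) (by omega) hlx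
  have hmin : ∀ j t : ℕ, j ∈ Finset.Icc 1 n → j ∉ (Finset.Icc 1 ℓ).image g →
      t ∈ Finset.Icc 1 T → t ∉ ((Finset.Icc 1 ℓ).image g).image σ →
      IsFeasible n T r d e h (insert j ((Finset.Icc 1 ℓ).image g)) (Function.update σ j t) →
      e (g (ℓ+1)) + h (σ (g (ℓ+1))) ≤ e j + h t := by
    simpa using hmin0
  set Gl := (Finset.Icc 1 ℓ).image g with hGldef
  set Gl1 := (Finset.Icc 1 (ℓ+1)).image g with hGl1def
  set js := g (ℓ+1) with hjsdef
  set ts := σ (g (ℓ+1)) with htsdef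
  obtain ⟨hG1n, hG1inj, hG1e⟩ := hG1
  obtain ⟨hSn, hSinj, hSe⟩ := hS
  have hS' : IsFeasible n T r d e h J σS := ⟨hSn, hSinj, hSe⟩
  have hjmem : js ∈ Gl1 :=
    Finset.mem_image.2 ⟨ℓ+1, Finset.mem_Icc.2 ⟨by omega, le_rfl⟩, rfl⟩
  have hjb := hG1e js hjmem
  have hGlsub1 : Gl ⊆ Gl1 :=
    Finset.image_subset_image (Finset.Icc_subset_Icc_right (by omega))
  have hjGl : js ∉ Gl := by
    intro hmem
    obtain ⟨i, hi, hgi⟩ := Finset.mem_image.1 hmem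
    have hi' := Finset.mem_Icc.1 hi
    have : i = ℓ + 1 := by
      apply hginj (Finset.mem_coe.2 (Finset.mem_Icc.2 ⟨hi'.1, by omega⟩))
        (Finset.mem_coe.2 (Finset.mem_Icc.2 ⟨by omega, hlx⟩)) hgi
    omega
  have hagree' : ∀ u ∈ Gl, σS u = σ u := by
    intro u hu
    obtain ⟨i, hi, rfl⟩ := Finset.mem_image.1 hu
    exact hagree i hi
  have hGlts : ∀ u ∈ Gl, σ u ≠ ts := by
    intro u hu hequ
    have h2 : u = js :=
      hG1inj (Finset.mem_coe.2 (hGlsub1 hu)) (Finset.mem_coe.2 hjmem) hequ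
    exact hjGl (h2 ▸ hu)
  have hGlJ : Gl ⊆ J := hsub
  have hjn : js ∈ Finset.Icc 1 n := hG1n hjmem
  have hGl1ins : Gl1 = insert js Gl := by
    rw [hGl1def, hGldef, hjsdef]
    ext u
    simp only [Finset.mem_image, Finset.mem_insert, Finset.mem_Icc]
    constructor
    · rintro ⟨i, hi, rfl⟩
      by_cases hieq : i = ℓ + 1
      · subst hieq; exact Or.inl rfl
      · exact Or.inr ⟨i, ⟨hi.1, by omega⟩, rfl⟩
    · rintro (rfl | ⟨i, hi, rfl⟩)
      exacts [⟨ℓ+1, ⟨by omega, le_rfl⟩, rfl⟩, ⟨i, ⟨hi.1, by omega⟩, rfl⟩]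
  -- the star inequality
  have star : ∀ a ∈ J, a ∉ Gl → e js + h ts ≤ e a + h (σS a) := by
    intro a haJ haGl
    have haslot := hSe a haJ
    have hsub2 : insert a Gl ⊆ J := Finset.insert_subset haJ hGlJ
    have hagr2 : ∀ u ∈ insert a Gl, Function.update σ a (σS a) u = σS u := by
      intro u hu
      rcases Finset.mem_insert.1 hu with rfl | hu'
      · simp
      · have hne : u ≠ a := by rintro rfl; exact haGl hu'
        rw [Function.update_of_ne hne]
        exact (hagree' u hu').symm
    apply hmin a (σS a) (hSn haJ) haGl (Finset.mem_Icc.2 ⟨haslot.1, haslot.2.1⟩)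
    · intro hmem
      obtain ⟨u, hu, hequ⟩ := Finset.mem_image.1 hmem
      have huJ := hGlJ hu
      have : u = a := by
        apply hSinj (Finset.mem_coe.2 huJ) (Finset.mem_coe.2 haJ)
        rw [hagree' u hu]; exact hequ
      exact haGl (this ▸ hu)
    · refine ⟨Finset.insert_subset (hSn haJ) (fun u hu => hSn (hGlJ hu)), ?_, ?_⟩
      · intro u hu v hv huv
        have hu' := Finset.mem_coe.1 hu
        have hv' := Finset.mem_coe.1 hv
        rw [hagr2 u hu', hagr2 v hv'] at huv
        exact hSinj (Finset.mem_coe.2 (hsub2 hu')) (Finset.mem_coe.2 (hsub2 hv')) huv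
      · intro u hu
        have huJ := hsub2 hu
        have hb := hSe u huJ
        rw [hagr2 u hu]
        refine ⟨hb.1, hb.2.1, hb.2.2.1, hb.2.2.2.1, ?_⟩
        calc e u ≤ energyBefore e h J σS (σS u) := hb.2.2.2.2
          _ ≤ energyBefore e h (insert a Gl) (Function.update σ a (σS a)) (σS u) :=
            energy_mono e h he hh _ _ _ _ _ hsub2 hagr2
  -- the new schedule
  set σ' := Function.update σS js ts with hσ'def
  set B := (J.erase w).erase js with hBdef
  set J' := insert js B with hJ'def
  have hjsB : js ∉ B := Finset.notMem_erase _ _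
  have hBJ : B ⊆ J := (Finset.erase_subset _ _).trans (Finset.erase_subset _ _)
  have hBne : ∀ v ∈ B, v ≠ w ∧ v ≠ js := by
    intro v hv
    obtain ⟨hv1, hv2⟩ := Finset.mem_erase.1 hv
    exact ⟨(Finset.mem_erase.1 hv2).1, hv1⟩
  have hσ'B : ∀ i ∈ B, σ' i = σS i := by
    intro i hi
    exact Function.update_of_ne (hBne i hi).2 _ _
  have hσ'js : σ' js = ts := Function.update_self _ _ _
  have htsB : ∀ v ∈ B, σS v ≠ ts := by
    rcases hsc with ⟨hwJ, hwts⟩ | ⟨hc1, -⟩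
    · intro v hv hvts
      have : v = w := by
        apply hSinj (Finset.mem_coe.2 (hBJ hv)) (Finset.mem_coe.2 hwJ)
        rw [hvts, hwts]
      exact (hBne v hv).1 this
    · exact fun v hv => hc1 v (hBJ hv)
  have Estep : ∀ t, energyBefore e h J' σ' t
      = energyBefore e h B σS t - (if ts < t then e js + h ts else 0) := by
    intro t
    rw [hJ'def, energy_insert e h B σ' js t hjsB, energy_congr e h B σ' σS t hσ'B, hσ'js]
  have EBlow : ∀ t, energyBefore e h J σS t ≤ energyBefore e h B σS t :=
    fun t => energy_mono e h he hh B J σS σS t hBJ (fun _ _ => rfl)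
  have EBcomp : ∀ t, w ∈ J → σS w < t →
      energyBefore e h J σS t + (e w + h (σS w)) ≤ energyBefore e h B σS t := by
    intro t hwJ hwt
    have h1 := energy_erase e h J σS w t hwJ hwt
    have h2 : energyBefore e h (J.erase w) σS t ≤ energyBefore e h B σS t :=
      energy_mono e h he hh B (J.erase w) σS σS t (Finset.erase_subset _ _) (fun _ _ => rfl)
    linarith
  have hGlB : ∀ u ∈ Gl, u ∈ B := by
    intro u hu
    refine Finset.mem_erase.2 ⟨fun h' => hjGl (h' ▸ hu), Finset.mem_erase.2
      ⟨fun h' => hwGl (h' ▸ hu), hGlJ hu⟩⟩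
  have key : ∀ t, (∀ a ∈ J, a ∉ Gl → ¬ σS a < t) →
      energyBefore e h J' σ' t = energyBefore e h Gl1 σ t := by
    intro t hno
    have hset : J'.filter (fun i => σ' i < t) = Gl1.filter (fun i => σ i < t) := by
      ext u
      simp only [Finset.mem_filter]
      constructor
      · rintro ⟨huJ', hlt⟩
        rcases Finset.mem_insert.1 huJ' with rfl | huB
        · rw [hσ'js] at hlt
          exact ⟨hjmem, hlt⟩
        · have huJ := hBJ huB
          rw [hσ'B u huB] at hlt
          have huGl : u ∈ Gl := by
            by_contra hn
            exact hno u huJ hn hlt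
          refine ⟨hGlsub1 huGl, ?_⟩
          rw [← hagree' u huGl]; exact hlt
      · rintro ⟨huG1, hlt⟩
        rw [hGl1ins] at huG1
        rcases Finset.mem_insert.1 huG1 with rfl | huGl
        · refine ⟨Finset.mem_insert_self _ _, ?_⟩
          rw [hσ'js]; exact hlt
        · have huB := hGlB u huGl
          refine ⟨Finset.mem_insert_of_mem huB, ?_⟩
          rw [hσ'B u huB, hagree' u huGl]; exact hlt
    unfold energyBefore
    rw [hset]
    congr 1
    apply Finset.sum_congr rfl
    intro u hu
    obtain ⟨huG1, -⟩ := Finset.mem_filter.1 hu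
    rw [hGl1ins] at huG1
    rcases Finset.mem_insert.1 huG1 with rfl | huGl
    · rw [hσ'js]
    · rw [hσ'B u (hGlB u huGl), hagree' u huGl]
  refine ⟨J', σ', ⟨?_, ?_, ?_⟩, ?_, ?_, ?_, ?_⟩
  · -- subset of Icc 1 n
    exact Finset.insert_subset hjn (hBJ.trans hSn)
  · -- injectivity
    intro u hu v hv huv
    have hu' := Finset.mem_coe.1 hu
    have hv' := Finset.mem_coe.1 hv
    rcases Finset.mem_insert.1 hu' with rfl | huB <;> rcases Finset.mem_insert.1 hv' with rfl | hvB
    · rfl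
    · exfalso
      rw [hσ'js, hσ'B v hvB] at huv
      exact htsB v hvB huv.symm
    · exfalso
      rw [hσ'js, hσ'B u huB] at huv
      exact htsB u huB huv
    · rw [hσ'B u huB, hσ'B v hvB] at huv
      exact hSinj (Finset.mem_coe.2 (hBJ huB)) (Finset.mem_coe.2 (hBJ hvB)) huv
  · -- bounds and energy
    intro i hi
    rcases Finset.mem_insert.1 hi with rfl | hiB
    · rw [hσ'js]
      refine ⟨hjb.1, hjb.2.1, hjb.2.2.1, hjb.2.2.2.1, ?_⟩
      rcases hsc with ⟨hwJ, hwts⟩ | ⟨hc1, hc2⟩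
      · rw [Estep ts, if_neg (lt_irrefl ts), sub_zero]
        have h1 : e js ≤ e w := by
          have hst := star w hwJ hwGl
          rw [hwts] at hst
          linarith
        have h2 : e w ≤ energyBefore e h J σS ts := by
          have := (hSe w hwJ).2.2.2.2
          rwa [hwts] at this
        linarith [EBlow ts]
      · by_cases hEx : ∃ a ∈ J, a ∉ Gl ∧ σS a < ts
        · rw [Estep ts, if_neg (lt_irrefl ts), sub_zero]
          obtain ⟨a, haJ, haGl, halt⟩ := hEx
          obtain ⟨hwJ, hwle⟩ := hc2 a haJ haGl
          have hwlt : σS w < ts := lt_of_le_of_lt hwle halt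
          have h1 := EBcomp ts hwJ hwlt
          have h2 := star w hwJ hwGl
          have h3 := energy_nonneg n T r d e h he hh J σS hS' ts
          have h4 : (0:ℤ) ≤ h ts := hh ts
          linarith
        · push_neg at hEx
          rw [key ts (fun a haJ haGl halt => absurd halt (by
            have := hEx a haJ haGl; omega))]
          exact hjb.2.2.2.2
    · have hiJ := hBJ hiB
      have hbnd := hSe i hiJ
      rw [hσ'B i hiB]
      refine ⟨hbnd.1, hbnd.2.1, hbnd.2.2.1, hbnd.2.2.2.1, ?_⟩
      by_cases hts : ts < σS i
      · rcases hsc with ⟨hwJ, hwts⟩ | ⟨hc1, hc2⟩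
        · rw [Estep (σS i), if_pos hts]
          have hwlt : σS w < σS i := by rw [hwts]; exact hts
          have h1 := EBcomp (σS i) hwJ hwlt
          have h2 := star w hwJ hwGl
          have h3 := hbnd.2.2.2.2
          linarith
        · by_cases hEx : ∃ a ∈ J, a ∉ Gl ∧ σS a < σS i
          · rw [Estep (σS i), if_pos hts]
            obtain ⟨a, haJ, haGl, halt⟩ := hEx
            obtain ⟨hwJ, hwle⟩ := hc2 a haJ haGl
            have hwlt : σS w < σS i := lt_of_le_of_lt hwle halt
            have h1 := EBcomp (σS i) hwJ hwlt
            have h2 := star w hwJ hwGl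
            have h3 := hbnd.2.2.2.2
            linarith
          · push_neg at hEx
            have hiGl : i ∈ Gl := by
              by_contra hiGl
              obtain ⟨hwJ, hwle⟩ := hc2 i hiJ hiGl
              have hwne : w ≠ i := fun hwi => (hBne i hiB).1 hwi.symm
              have hσne : σS w ≠ σS i := fun hq =>
                hwne (hSinj (Finset.mem_coe.2 hwJ) (Finset.mem_coe.2 hiJ) hq)
              have h5 := hEx w hwJ hwGl
              omega
            rw [key (σS i) (fun a haJ haGl halt => absurd halt (by
              have := hEx a haJ haGl; omega))]
            obtain ⟨p, hp, rfl⟩ := Finset.mem_image.1 hiGl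
            rw [hagree p hp]
            exact (hG1e (g p) (hGlsub1 hiGl)).2.2.2.2
      · rw [Estep (σS i), if_neg hts, sub_zero]
        have h3 := hbnd.2.2.2.2
        linarith [EBlow (σS i)]
  · -- cardinality
    have hc1 : J'.card = B.card + 1 := Finset.card_insert_of_notMem hjsB
    have hc2 : J.card - 1 ≤ (J.erase w).card := Finset.pred_card_le_card_erase
    have hc3 : (J.erase w).card - 1 ≤ B.card := Finset.pred_card_le_card_erase
    have hc4 : (J.erase w).card ≤ J.card := Finset.card_le_card (Finset.erase_subset _ _)
    omega
  · -- Gl1 ⊆ J'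
    rw [hGl1ins]
    intro u hu
    rcases Finset.mem_insert.1 hu with rfl | huGl
    · exact Finset.mem_insert_self _ _
    · exact Finset.mem_insert_of_mem (hGlB u huGl)
  · -- σ' agrees with σ on the greedy jobs
    intro i hi
    have hi' := Finset.mem_Icc.1 hi
    by_cases hieq : i = ℓ + 1
    · subst hieq
      rw [← hjsdef, hσ'js]
    · have higl : g i ∈ Gl :=
        Finset.mem_image.2 ⟨i, Finset.mem_Icc.2 ⟨hi'.1, by omega⟩, rfl⟩
      have hne : g i ≠ js := fun h' => hjGl (h' ▸ higl)
      rw [show σ' (g i) = σS (g i) from Function.update_of_ne hne _ _,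
        hagree i (Finset.mem_Icc.2 ⟨hi'.1, by omega⟩)]
  · -- difference
    intro u hu
    obtain ⟨huJ', hnG1⟩ := Finset.mem_sdiff.1 hu
    have hune : u ≠ js := fun h' => hnG1 (h' ▸ hjmem)
    have huB : u ∈ B := by
      rcases Finset.mem_insert.1 huJ' with h' | h'
      · exact absurd h' hune
      · exact h'
    exact Finset.mem_sdiff.2 ⟨hBJ huB, fun h'' => hnG1 (hGlsub1 h'')⟩

private lemma greedy_step (n T : ℕ) (r d : ℕ → ℕ) (e h : ℕ → ℤ)
    (he : ∀ i, 0 ≤ e i) (hh : ∀ t, 0 ≤ h t)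
    (x : ℕ) (g σ : ℕ → ℕ) (hgreedy : GreedySeq n T r d e h x g σ)
    (ℓ : ℕ) (hlx : ℓ + 1 ≤ x)
    (J : Finset ℕ) (σS : ℕ → ℕ) (hS : IsFeasible n T r d e h J σS)
    (hsub : (Finset.Icc 1 ℓ).image g ⊆ J)
    (hagree : ∀ i ∈ Finset.Icc 1 ℓ, σS (g i) = σ (g i)) :
    ∃ J' σ', IsFeasible n T r d e h J' σ' ∧ J.card ≤ J'.card + 1 ∧
      (Finset.Icc 1 (ℓ+1)).image g ⊆ J' ∧
      (∀ i ∈ Finset.Icc 1 (ℓ+1), σ' (g i) = σ (g i)) ∧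
      J' \ (Finset.Icc 1 (ℓ+1)).image g ⊆ J \ (Finset.Icc 1 ℓ).image g := by
  have hginj := hgreedy.1
  have hjGl : g (ℓ+1) ∉ (Finset.Icc 1 ℓ).image g := by
    intro hmem
    obtain ⟨i, hi, hgi⟩ := Finset.mem_image.1 hmem
    have hi' := Finset.mem_Icc.1 hi
    have : i = ℓ + 1 :=
      hginj (Finset.mem_coe.2 (Finset.mem_Icc.2 ⟨hi'.1, by omega⟩))
        (Finset.mem_coe.2 (Finset.mem_Icc.2 ⟨by omega, hlx⟩)) hgi
    omega
  have hagree' : ∀ u ∈ (Finset.Icc 1 ℓ).image g, σS u = σ u := by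
    intro u hu
    obtain ⟨i, hi, rfl⟩ := Finset.mem_image.1 hu
    exact hagree i hi
  by_cases hB : ∃ k ∈ J, σS k = σ (g (ℓ+1))
  · obtain ⟨w, hwJ, hwts⟩ := hB
    have hGlts : w ∉ (Finset.Icc 1 ℓ).image g := by
      intro hw
      -- then σ w = σ (g (ℓ+1)), and injectivity on Gl1 gives contradiction
      have hσw : σ w = σ (g (ℓ+1)) := by rw [← hagree' w hw]; exact hwts
      obtain ⟨i, hi, rfl⟩ := Finset.mem_image.1 hw
      have hi' := Finset.mem_Icc.1 hi
      have hG1inj := (hgreedy.2.1 (ℓ+1) (by omega) hlx).1.2.1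
      have hmem1 : g i ∈ (Finset.Icc 1 (ℓ+1)).image g :=
        Finset.mem_image.2 ⟨i, Finset.mem_Icc.2 ⟨hi'.1, by omega⟩, rfl⟩
      have hmem2 : g (ℓ+1) ∈ (Finset.Icc 1 (ℓ+1)).image g :=
        Finset.mem_image.2 ⟨ℓ+1, Finset.mem_Icc.2 ⟨by omega, le_rfl⟩, rfl⟩
      have : g i = g (ℓ+1) :=
        hG1inj (Finset.mem_coe.2 hmem1) (Finset.mem_coe.2 hmem2) hσw
      exact hjGl (this ▸ Finset.mem_image.2 ⟨i, hi, rfl⟩)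
    exact greedy_core n T r d e h he hh x g σ hgreedy ℓ hlx J σS hS hsub hagree
      w hGlts (Or.inl ⟨hwJ, hwts⟩)
  · push_neg at hB
    by_cases hA : ∃ a ∈ J, a ∉ (Finset.Icc 1 ℓ).image g
    · obtain ⟨a₀, ha₀J, ha₀Gl⟩ := hA
      have hAne : (J.filter (fun a => a ∉ (Finset.Icc 1 ℓ).image g)).Nonempty :=
        ⟨a₀, Finset.mem_filter.2 ⟨ha₀J, ha₀Gl⟩⟩
      obtain ⟨w, hwA, hwmin⟩ :=
        Finset.exists_min_image (J.filter (fun a => a ∉ (Finset.Icc 1 ℓ).image g)) σS hAne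
      obtain ⟨hwJ, hwGl⟩ := Finset.mem_filter.1 hwA
      refine greedy_core n T r d e h he hh x g σ hgreedy ℓ hlx J σS hS hsub hagree
        w hwGl (Or.inr ⟨hB, fun a haJ haGl => ⟨hwJ, ?_⟩⟩)
      exact hwmin a (Finset.mem_filter.2 ⟨haJ, haGl⟩)
    · push_neg at hA
      refine greedy_core n T r d e h he hh x g σ hgreedy ℓ hlx J σS hS hsub hagree
        (g (ℓ+1)) hjGl (Or.inr ⟨hB, fun a haJ haGl => absurd (hA a haJ) (by simpa using haGl)⟩)

/-- Let `O = (JO, σO)` be a maximum-cardinality feasible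
schedule with `|J(O)| = m` and let `(g, σ)` be a greedy sequence of length `x`.
Then after every iteration `ℓ ∈ {0,…,x}` there is a feasible schedule `(J', σ')`
with (i) `|J'| ≥ max {ℓ, m - ℓ}`, (ii) containing the first `ℓ` greedy jobs at
their greedy slots, and (iii) all of whose other jobs belong to `J(O)`. -/
theorem greedy_invariant (n T : ℕ) (r d : ℕ → ℕ) (e h : ℕ → ℤ)
    (he : ∀ i, 0 ≤ e i) (hh : ∀ t, 0 ≤ h t)
    (JO : Finset ℕ) (σO : ℕ → ℕ) (m : ℕ)
    (hO : IsFeasible n T r d e h JO σO) (hOcard : JO.card = m)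
    (hOmax : ∀ (J : Finset ℕ) (σ : ℕ → ℕ),
      IsFeasible n T r d e h J σ → J.card ≤ m)
    (x : ℕ) (g σ : ℕ → ℕ) (hgreedy : GreedySeq n T r d e h x g σ) :
    ∀ ℓ ≤ x, ∃ (J' : Finset ℕ) (σ' : ℕ → ℕ),
      IsFeasible n T r d e h J' σ' ∧
      max ℓ (m - ℓ) ≤ J'.card ∧
      ((Finset.Icc 1 ℓ).image g ⊆ J' ∧
        ∀ i ∈ Finset.Icc 1 ℓ, σ' (g i) = σ (g i)) ∧
      J' \ (Finset.Icc 1 ℓ).image g ⊆ JO := by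
  intro ℓ
  induction ℓ with
  | zero =>
    intro _
    have hempty : Finset.Icc 1 0 = (∅ : Finset ℕ) := Finset.Icc_eq_empty (by omega)
    refine ⟨JO, σO, hO, by omega, ⟨?_, ?_⟩, ?_⟩
    · rw [hempty, Finset.image_empty]
      exact Finset.empty_subset _
    · intro i hi
      rw [hempty] at hi
      exact absurd hi (Finset.notMem_empty _)
    · rw [hempty, Finset.image_empty, Finset.sdiff_empty]
  | succ ℓ IH =>
    intro hsx
    obtain ⟨J, σS, hfeas, hcard, ⟨hsub, hagree⟩, hdiff⟩ := IH (by omega)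
    obtain ⟨J', σ', hfeas', hcard', hsub', hagree', hdiff'⟩ :=
      greedy_step n T r d e h he hh x g σ hgreedy ℓ hsx J σS hfeas hsub hagree
    refine ⟨J', σ', hfeas', ?_, ⟨hsub', hagree'⟩, fun u hu => hdiff (hdiff' hu)⟩
    have h1 : ℓ + 1 ≤ J'.card := by
      have hcGl1 : ((Finset.Icc 1 (ℓ+1)).image g).card = ℓ + 1 := by
        rw [Finset.card_image_of_injOn (hgreedy.1.mono ?_), Nat.card_Icc]
        · omega
        · exact Finset.coe_subset.2 (Finset.Icc_subset_Icc_right hsx)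
      calc ℓ + 1 = ((Finset.Icc 1 (ℓ+1)).image g).card := hcGl1.symm
        _ ≤ J'.card := Finset.card_le_card hsub'
    have h2 : m - ℓ ≤ J.card := le_trans (le_max_right _ _) hcard
    omega
end

section
/- Let m be the maximum cardinality of a feasible schedule, and let (J^g_1, t_1), …, (J^g_x, t_x) be any greedy sequence for the instance. Then 2x ≥ m; that is, the greedy algorithm schedules at least ⌈m/2⌉ jobs and is a 1/2-approximation for maximizing the number of feasibly scheduled jobs. -/
/- ### Auxiliary lemmas -/

lemma eas_filter_le_split {J : Finset ℕ} {σ : ℕ → ℕ} (hinj : Set.InjOn σ ↑J)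
    {i : ℕ} (hi : i ∈ J) :
    J.filter (fun j => σ j ≤ σ i) = insert i (J.filter (fun j => σ j < σ i)) := by
  ext j
  simp only [Finset.mem_filter, Finset.mem_insert]
  constructor
  · rintro ⟨hjJ, hle⟩
    rcases lt_or_eq_of_le hle with hlt | heq
    · exact Or.inr ⟨hjJ, hlt⟩
    · exact Or.inl (hinj hjJ hi heq)
  · rintro (rfl | ⟨hjJ, hlt⟩)
    · exact ⟨hi, le_rfl⟩
    · exact ⟨hjJ, hlt.le⟩

lemma eas_Icc_sum_split (h : ℕ → ℤ) {s : ℕ} (hs : 1 ≤ s) :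
    (∑ τ ∈ Finset.Icc 1 s, h τ) = (∑ τ ∈ Finset.Icc 1 (s - 1), h τ) + h s := by
  conv_lhs => rw [show s = (s - 1) + 1 from (Nat.succ_pred_eq_of_pos hs).symm]
  rw [Finset.sum_Icc_succ_top (by omega), Nat.sub_add_cancel hs]

lemma eas_job_prefix {e h : ℕ → ℤ} {J : Finset ℕ} {σ : ℕ → ℕ}
    (hinj : Set.InjOn σ ↑J) {i : ℕ} (hi : i ∈ J) (h1 : 1 ≤ σ i) :
    e i ≤ energyBefore e h J σ (σ i) ↔
      (∑ j ∈ J.filter (fun j => σ j ≤ σ i), (e j + h (σ j))) ≤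
        ∑ τ ∈ Finset.Icc 1 (σ i), h τ := by
  rw [eas_filter_le_split hinj hi, Finset.sum_insert (by simp),
    eas_Icc_sum_split h h1, energyBefore]
  constructor <;> intro <;> linarith

lemma eas_feasible_prefix {n T : ℕ} {r d : ℕ → ℕ} {e h : ℕ → ℤ}
    {J : Finset ℕ} {σ : ℕ → ℕ}
    (hh : ∀ t, 0 ≤ h t) (hf : IsFeasible n T r d e h J σ) (t : ℕ) :
    (∑ j ∈ J.filter (fun j => σ j ≤ t), (e j + h (σ j))) ≤
      ∑ τ ∈ Finset.Icc 1 t, h τ := by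
  obtain ⟨hJn, hinj, hjob⟩ := hf
  rcases (J.filter (fun j => σ j ≤ t)).eq_empty_or_nonempty with he' | hne
  · rw [he', Finset.sum_empty]
    exact Finset.sum_nonneg fun τ _ => hh τ
  · obtain ⟨i₀, hi₀, hmax⟩ := Finset.exists_max_image _ σ hne
    have hi₀J : i₀ ∈ J := (Finset.mem_filter.mp hi₀).1
    have hi₀t : σ i₀ ≤ t := (Finset.mem_filter.mp hi₀).2
    have hFeq : J.filter (fun j => σ j ≤ t) = J.filter (fun j => σ j ≤ σ i₀) := by
      ext j
      simp only [Finset.mem_filter]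
      constructor
      · exact fun ⟨h1, h2⟩ => ⟨h1, hmax j (Finset.mem_filter.mpr ⟨h1, h2⟩)⟩
      · exact fun ⟨h1, h2⟩ => ⟨h1, h2.trans hi₀t⟩
    rw [hFeq]
    obtain ⟨hσ1, _, _, _, hE⟩ := hjob i₀ hi₀J
    exact ((eas_job_prefix hinj hi₀J hσ1).mp hE).trans
      (Finset.sum_le_sum_of_subset_of_nonneg
        (Finset.Icc_subset_Icc_right hi₀t) fun τ _ _ => hh τ)

lemma eas_feasible_of_prefix {n T : ℕ} {r d : ℕ → ℕ} {e h : ℕ → ℤ}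
    {J : Finset ℕ} {σ : ℕ → ℕ}
    (hJn : J ⊆ Finset.Icc 1 n) (hinj : Set.InjOn σ ↑J)
    (hb : ∀ i ∈ J, 1 ≤ σ i ∧ σ i ≤ T ∧ r i ≤ σ i ∧ σ i ≤ d i)
    (hp : ∀ t, (∑ j ∈ J.filter (fun j => σ j ≤ t), (e j + h (σ j))) ≤
      ∑ τ ∈ Finset.Icc 1 t, h τ) :
    IsFeasible n T r d e h J σ := by
  refine ⟨hJn, hinj, fun i hi => ?_⟩
  obtain ⟨h1, h2, h3, h4⟩ := hb i hi
  exact ⟨h1, h2, h3, h4, (eas_job_prefix hinj hi h1).mpr (hp (σ i))⟩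

lemma eas_feasible_subset {n T : ℕ} {r d : ℕ → ℕ} {e h : ℕ → ℤ}
    (he : ∀ i, 0 ≤ e i) (hh : ∀ t, 0 ≤ h t)
    {J J₂ : Finset ℕ} {σ σ₂ : ℕ → ℕ}
    (hf : IsFeasible n T r d e h J σ) (hsub : J₂ ⊆ J)
    (hag : ∀ i ∈ J₂, σ₂ i = σ i) :
    IsFeasible n T r d e h J₂ σ₂ := by
  obtain ⟨hJn, hinj, hjob⟩ := hf
  refine ⟨hsub.trans hJn, ?_, fun i hi => ?_⟩
  · intro a ha b hb hab
    exact hinj (hsub ha) (hsub hb)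
      (by rwa [hag a ha, hag b hb] at hab)
  · rw [hag i hi]
    obtain ⟨h1, h2, h3, h4, h5⟩ := hjob i (hsub hi)
    refine ⟨h1, h2, h3, h4, h5.trans ?_⟩
    unfold energyBefore
    have hsum : (∑ j ∈ J₂.filter (fun j => σ₂ j < σ i), (e j + h (σ₂ j))) ≤
        ∑ j ∈ J.filter (fun j => σ j < σ i), (e j + h (σ j)) := by
      calc (∑ j ∈ J₂.filter (fun j => σ₂ j < σ i), (e j + h (σ₂ j)))
          = ∑ j ∈ J₂.filter (fun j => σ₂ j < σ i), (e j + h (σ j)) :=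
            Finset.sum_congr rfl (fun j hj => by
              rw [hag j (Finset.mem_filter.mp hj).1])
        _ ≤ _ := by
            refine Finset.sum_le_sum_of_subset_of_nonneg ?_
              (fun j _ _ => add_nonneg (he j) (hh _))
            intro j hj
            rw [Finset.mem_filter] at hj ⊢
            exact ⟨hsub hj.1, by rw [← hag j hj.1]; exact hj.2⟩
    linarith

/-- If `m` is the maximum cardinality of a feasible schedule and
`(g, σ)` is any greedy sequence of length `x`, then `2x ≥ m`: the greedy
algorithm is a `1/2`-approximation for maximizing the number of scheduled jobs. -/
theorem greedy_half_approx (n T : ℕ) (r d : ℕ → ℕ) (e h : ℕ → ℤ)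
    (he : ∀ i, 0 ≤ e i) (hh : ∀ t, 0 ≤ h t)
    (m : ℕ)
    (hm : IsGreatest {c : ℕ | ∃ (J : Finset ℕ) (σ : ℕ → ℕ),
      IsFeasible n T r d e h J σ ∧ J.card = c} m)
    (x : ℕ) (g σ : ℕ → ℕ) (hgreedy : GreedySeq n T r d e h x g σ) :
    m ≤ 2 * x := by
  obtain ⟨hginj, hstep, hmax⟩ := hgreedy
  obtain ⟨J₀, σ₀, hf₀, hc₀⟩ := hm.1
  have hcostpos : ∀ (i s : ℕ), (0:ℤ) ≤ e i + h s := fun i s => add_nonneg (he i) (hh s)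
  -- Invariant: a feasible schedule extending G_ℓ with at least m - ℓ jobs.
  have key : ∀ ℓ : ℕ, ℓ ≤ x → ∃ (J' : Finset ℕ) (σ' : ℕ → ℕ),
      IsFeasible n T r d e h J' σ' ∧ (Finset.Icc 1 ℓ).image g ⊆ J' ∧
      (∀ i ∈ (Finset.Icc 1 ℓ).image g, σ' i = σ i) ∧ m ≤ J'.card + ℓ := by
    intro ℓ
    induction ℓ with
    | zero =>
      intro _
      refine ⟨J₀, σ₀, hf₀, by simp, by simp, by omega⟩
    | succ ℓ ih =>
      intro hLx
      obtain ⟨J', σ', hfJ, hsubG, hagG, hcard⟩ := ih (by omega)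
      obtain ⟨hfGL, hmin⟩ := hstep (ℓ + 1) (by omega) hLx
      simp only [Nat.add_sub_cancel] at hmin
      have hGL : (Finset.Icc 1 (ℓ + 1)).image g
          = insert (g (ℓ + 1)) ((Finset.Icc 1 ℓ).image g) := by
        rw [← Finset.insert_Icc_right_eq_Icc_add_one (by omega), Finset.image_insert]
      have haGL : g (ℓ + 1) ∈ (Finset.Icc 1 (ℓ + 1)).image g :=
        Finset.mem_image.mpr ⟨ℓ + 1, Finset.mem_Icc.mpr ⟨by omega, le_rfl⟩, rfl⟩
      have haG : g (ℓ + 1) ∉ (Finset.Icc 1 ℓ).image g := by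
        intro hmem
        obtain ⟨i, hi, hgi⟩ := Finset.mem_image.mp hmem
        rw [Finset.mem_Icc] at hi
        have : i = ℓ + 1 := hginj
          (Finset.mem_coe.mpr (Finset.mem_Icc.mpr ⟨hi.1, by omega⟩))
          (Finset.mem_coe.mpr (Finset.mem_Icc.mpr ⟨by omega, hLx⟩)) hgi
        omega
      obtain ⟨hta1, htaT, htar, htad, _⟩ := hfGL.2.2 _ haGL
      by_cases hDem : J' ⊆ (Finset.Icc 1 ℓ).image g
      · -- J' is contained in G_ℓ: greedy schedule G_{ℓ+1} itself works.
        refine ⟨(Finset.Icc 1 (ℓ + 1)).image g, σ, hfGL, le_rfl, fun i _ => rfl, ?_⟩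
        have h1 : J'.card ≤ ((Finset.Icc 1 ℓ).image g).card := Finset.card_le_card hDem
        have h2 : ((Finset.Icc 1 ℓ).image g).card
            ≤ ((Finset.Icc 1 (ℓ + 1)).image g).card := by
          rw [hGL]; exact Finset.card_le_card (Finset.subset_insert _ _)
        omega
      · obtain ⟨jw, hjwJ, hjwG⟩ := Finset.not_subset.mp hDem
        -- Main exchange construction, for a suitable removed job j0.
        have main : ∀ j0, j0 ∈ J' → j0 ∉ (Finset.Icc 1 ℓ).image g →
            (σ' j0 ≤ σ (g (ℓ + 1)) ∨
              ∀ i ∈ J', i ∉ (Finset.Icc 1 ℓ).image g → σ' j0 ≤ σ' i) →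
            (∀ j ∈ J', σ' j = σ (g (ℓ + 1)) → j = j0 ∨ j = g (ℓ + 1)) →
            ∃ (J'' : Finset ℕ) (σ'' : ℕ → ℕ),
              IsFeasible n T r d e h J'' σ'' ∧
              (Finset.Icc 1 (ℓ + 1)).image g ⊆ J'' ∧
              (∀ i ∈ (Finset.Icc 1 (ℓ + 1)).image g, σ'' i = σ i) ∧
              m ≤ J''.card + (ℓ + 1) := by
          intro j0 hj0J hj0G hslot hcoll
          set a := g (ℓ + 1) with hadef
          set K : Finset ℕ := (J'.erase j0).erase a with hKdef
          set σ'' : ℕ → ℕ := Function.update σ' a (σ a) with hσ''def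
          have haK : a ∉ K := Finset.notMem_erase _ _
          have hKsub : K ⊆ J' := (Finset.erase_subset _ _).trans (Finset.erase_subset _ _)
          have hj0K : j0 ∉ K := by
            simp only [hKdef, Finset.mem_erase]
            tauto
          have hσ''K : ∀ i ∈ K, σ'' i = σ' i := by
            intro i hi
            exact Function.update_of_ne (by rintro rfl; exact haK hi) _ _
          have hσ''a : σ'' a = σ a := Function.update_self _ _ _
          -- greedy minimality applied to the pair (j0, σ' j0)
          obtain ⟨hj0σ1, hj0σT, _, _, _⟩ := hfJ.2.2 j0 hj0J
          have hins : IsFeasible n T r d e h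
              (insert j0 ((Finset.Icc 1 ℓ).image g))
              (Function.update σ j0 (σ' j0)) := by
            apply eas_feasible_subset he hh hfJ
            · intro i hi
              rcases Finset.mem_insert.mp hi with rfl | hiG
              · exact hj0J
              · exact hsubG hiG
            · intro i hi
              rcases Finset.mem_insert.mp hi with rfl | hiG
              · rw [Function.update_self]
              · rw [Function.update_of_ne (by rintro rfl; exact hj0G hiG)]
                exact (hagG i hiG).symm
          have hmin0 : e a + h (σ a) ≤ e j0 + h (σ' j0) := by
            apply hmin j0 (σ' j0) (hfJ.1 hj0J) hj0G
              (Finset.mem_Icc.mpr ⟨hj0σ1, hj0σT⟩) ?_ hins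
            intro hc
            obtain ⟨i, hiG, hσi⟩ := Finset.mem_image.mp hc
            have h1 : σ' i = σ' j0 := by rw [hagG i hiG, hσi]
            have h2 : i = j0 := hfJ.2.1 (Finset.mem_coe.mpr (hsubG hiG))
              (Finset.mem_coe.mpr hj0J) h1
            exact hj0G (h2 ▸ hiG)
          -- prefix-load bounds
          have hSKle : ∀ t, (∑ i ∈ K.filter (fun i => σ' i ≤ t), (e i + h (σ' i))) ≤
              ∑ i ∈ J'.filter (fun i => σ' i ≤ t), (e i + h (σ' i)) := fun t =>
            Finset.sum_le_sum_of_subset_of_nonneg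
              (Finset.filter_subset_filter _ hKsub) (fun i _ _ => hcostpos _ _)
          have hSKle2 : ∀ t, σ' j0 ≤ t →
              (∑ i ∈ K.filter (fun i => σ' i ≤ t), (e i + h (σ' i)))
                + (e j0 + h (σ' j0)) ≤
              ∑ i ∈ J'.filter (fun i => σ' i ≤ t), (e i + h (σ' i)) := by
            intro t ht
            have h1 : insert j0 (K.filter (fun i => σ' i ≤ t))
                ⊆ J'.filter (fun i => σ' i ≤ t) := by
              intro i hi
              rcases Finset.mem_insert.mp hi with rfl | hi
              · exact Finset.mem_filter.mpr ⟨hj0J, ht⟩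
              · exact Finset.filter_subset_filter _ hKsub hi
            have h2 := Finset.sum_le_sum_of_subset_of_nonneg
              (f := fun i => e i + h (σ' i)) h1 (fun i _ _ => hcostpos i (σ' i))
            rwa [Finset.sum_insert
              (fun hc => hj0K (Finset.mem_filter.mp hc).1), add_comm] at h2
          have hprefix : ∀ t,
              (∑ i ∈ (insert a K).filter (fun i => σ'' i ≤ t), (e i + h (σ'' i))) ≤
                ∑ τ ∈ Finset.Icc 1 t, h τ := by
            intro t
            have hCJ' := eas_feasible_prefix hh hfJ t
            have hKcongr : (∑ i ∈ K.filter (fun i => σ'' i ≤ t), (e i + h (σ'' i)))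
                = ∑ i ∈ K.filter (fun i => σ' i ≤ t), (e i + h (σ' i)) := by
              rw [Finset.filter_congr (fun i hi => by rw [hσ''K i hi])]
              exact Finset.sum_congr rfl
                (fun i hi => by rw [hσ''K i (Finset.mem_filter.mp hi).1])
            rw [Finset.filter_insert]
            by_cases hat : σ a ≤ t
            · rw [if_pos (show σ'' a ≤ t by rw [hσ''a]; exact hat),
                Finset.sum_insert (fun hc => haK (Finset.mem_filter.mp hc).1),
                hσ''a, hKcongr]
              by_cases hj0t : σ' j0 ≤ t
              · have := hSKle2 t hj0t
                linarith
              · -- j0's slot is after t; so it was the minimal-slot extra job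
                have hminD : ∀ i ∈ J', i ∉ (Finset.Icc 1 ℓ).image g → σ' j0 ≤ σ' i := by
                  rcases hslot with hs | hs
                  · exact fun i _ _ => absurd (hs.trans hat) hj0t
                  · exact hs
                have hKG : ∀ i ∈ K.filter (fun i => σ' i ≤ t),
                    i ∈ (Finset.Icc 1 ℓ).image g := by
                  intro i hi
                  obtain ⟨hiK, hit⟩ := Finset.mem_filter.mp hi
                  by_contra hiG
                  exact hj0t ((hminD i (hKsub hiK) hiG).trans hit)
                have hSG : (∑ i ∈ K.filter (fun i => σ' i ≤ t), (e i + h (σ' i))) ≤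
                    ∑ i ∈ ((Finset.Icc 1 ℓ).image g).filter (fun i => σ i ≤ t),
                      (e i + h (σ i)) := by
                  calc (∑ i ∈ K.filter (fun i => σ' i ≤ t), (e i + h (σ' i)))
                      = ∑ i ∈ K.filter (fun i => σ' i ≤ t), (e i + h (σ i)) :=
                        Finset.sum_congr rfl
                          (fun i hi => by rw [hagG i (hKG i hi)])
                    _ ≤ _ := by
                        refine Finset.sum_le_sum_of_subset_of_nonneg ?_
                          (fun i _ _ => hcostpos _ _)
                        intro i hi
                        refine Finset.mem_filter.mpr ⟨hKG i hi, ?_⟩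
                        rw [← hagG i (hKG i hi)]
                        exact (Finset.mem_filter.mp hi).2
                have hCGL := eas_feasible_prefix hh hfGL t
                rw [hGL, Finset.filter_insert, if_pos hat,
                  Finset.sum_insert (fun hc => haG (Finset.mem_filter.mp hc).1)] at hCGL
                linarith
            · rw [if_neg (by rw [hσ''a]; exact hat), hKcongr]
              exact (hSKle t).trans hCJ'
          have hfJ'' : IsFeasible n T r d e h (insert a K) σ'' := by
            apply eas_feasible_of_prefix ?_ ?_ ?_ hprefix
            · intro i hi
              rcases Finset.mem_insert.mp hi with rfl | hiK
              · exact hfGL.1 haGL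
              · exact hfJ.1 (hKsub hiK)
            · intro i hi j hj hij
              simp only [Finset.coe_insert, Set.mem_insert_iff, Finset.mem_coe] at hi hj
              rcases hi with rfl | hiK <;> rcases hj with rfl | hjK
              · rfl
              · exfalso
                rw [hσ''a, hσ''K j hjK] at hij
                rcases hcoll j (hKsub hjK) hij.symm with rfl | rfl
                · exact hj0K hjK
                · exact haK hjK
              · exfalso
                rw [hσ''a, hσ''K i hiK] at hij
                rcases hcoll i (hKsub hiK) hij with rfl | rfl
                · exact hj0K hiK
                · exact haK hiK
              · rw [hσ''K i hiK, hσ''K j hjK] at hij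
                exact hfJ.2.1 (Finset.mem_coe.mpr (hKsub hiK))
                  (Finset.mem_coe.mpr (hKsub hjK)) hij
            · intro i hi
              rcases Finset.mem_insert.mp hi with rfl | hiK
              · rw [hσ''a]
                exact ⟨hta1, htaT, htar, htad⟩
              · rw [hσ''K i hiK]
                obtain ⟨b1, b2, b3, b4, _⟩ := hfJ.2.2 i (hKsub hiK)
                exact ⟨b1, b2, b3, b4⟩
          refine ⟨insert a K, σ'', hfJ'', ?_, ?_, ?_⟩
          · rw [hGL]
            intro i hi
            rcases Finset.mem_insert.mp hi with rfl | hiG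
            · exact Finset.mem_insert_self _ _
            · apply Finset.mem_insert_of_mem
              simp only [hKdef, Finset.mem_erase]
              exact ⟨by rintro rfl; exact haG hiG,
                by rintro rfl; exact hj0G hiG, hsubG hiG⟩
          · rw [hGL]
            intro i hi
            rcases Finset.mem_insert.mp hi with rfl | hiG
            · exact hσ''a
            · rw [hσ''def, Function.update_of_ne (by rintro rfl; exact haG hiG)]
              exact hagG i hiG
          · have h1 : J' ⊆ insert j0 (insert a K) := by
              intro i hi
              by_cases h1 : i = j0
              · simp [h1]
              · by_cases h2 : i = a
                · simp [h2]
                · apply Finset.mem_insert_of_mem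
                  apply Finset.mem_insert_of_mem
                  simp only [hKdef, Finset.mem_erase]
                  exact ⟨h2, h1, hi⟩
            have h2 : J'.card ≤ K.card + 2 := by
              calc J'.card ≤ (insert j0 (insert a K)).card := Finset.card_le_card h1
                _ ≤ (insert a K).card + 1 := Finset.card_insert_le _ _
                _ ≤ K.card + 2 := by
                    have := Finset.card_insert_le a K
                    omega
            have h3 : (insert a K).card = K.card + 1 :=
              Finset.card_insert_of_notMem haK
            omega
        -- choose j0
        by_cases hocc : ∃ j' ∈ J', j' ∉ (Finset.Icc 1 ℓ).image g ∧ σ' j' = σ (g (ℓ + 1))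
        · obtain ⟨j0, hj0J, hj0G, hj0s⟩ := hocc
          apply main j0 hj0J hj0G (Or.inl (le_of_eq hj0s))
          intro j hjJ hjs
          by_cases hjG : j ∈ (Finset.Icc 1 ℓ).image g
          · right
            have h1 : σ j = σ (g (ℓ + 1)) := by rw [← hagG j hjG, hjs]
            exact hfGL.2.1
              (Finset.mem_coe.mpr (by rw [hGL]; exact Finset.mem_insert_of_mem hjG))
              (Finset.mem_coe.mpr haGL) h1
          · left
            exact hfJ.2.1 (Finset.mem_coe.mpr hjJ) (Finset.mem_coe.mpr hj0J)
              (by rw [hjs, hj0s])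
        · push_neg at hocc
          have hDne : (J' \ (Finset.Icc 1 ℓ).image g).Nonempty :=
            ⟨jw, Finset.mem_sdiff.mpr ⟨hjwJ, hjwG⟩⟩
          obtain ⟨j0, hj0D, hj0min⟩ := Finset.exists_min_image _ σ' hDne
          obtain ⟨hj0J, hj0G⟩ := Finset.mem_sdiff.mp hj0D
          apply main j0 hj0J hj0G
            (Or.inr fun i hiJ hiG => hj0min i (Finset.mem_sdiff.mpr ⟨hiJ, hiG⟩))
          intro j hjJ hjs
          by_cases hjG : j ∈ (Finset.Icc 1 ℓ).image g
          · right
            have h1 : σ j = σ (g (ℓ + 1)) := by rw [← hagG j hjG, hjs]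
            exact hfGL.2.1
              (Finset.mem_coe.mpr (by rw [hGL]; exact Finset.mem_insert_of_mem hjG))
              (Finset.mem_coe.mpr haGL) h1
          · exact absurd hjs (hocc j hjJ hjG)
  -- Conclusion from the invariant at ℓ = x plus maximality.
  obtain ⟨J', σ', hfJ, hsubG, hagG, hcard⟩ := key x le_rfl
  by_contra hcon
  push_neg at hcon
  have hGcard : ((Finset.Icc 1 x).image g).card ≤ x :=
    (Finset.card_image_le).trans (by simp [Nat.card_Icc])
  have hns : ¬ J' ⊆ (Finset.Icc 1 x).image g := by
    intro hs
    have := Finset.card_le_card hs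
    omega
  obtain ⟨j, hjJ, hjG⟩ := Finset.not_subset.mp hns
  obtain ⟨hj1, hjT, _, _, _⟩ := hfJ.2.2 j hjJ
  apply hmax j (σ' j) (hfJ.1 hjJ) hjG (Finset.mem_Icc.mpr ⟨hj1, hjT⟩)
  · intro hc
    obtain ⟨i, hiG, hσi⟩ := Finset.mem_image.mp hc
    have h1 : σ' i = σ' j := by rw [hagG i hiG, hσi]
    have h2 : i = j := hfJ.2.1 (Finset.mem_coe.mpr (hsubG hiG))
      (Finset.mem_coe.mpr hjJ) h1
    exact hjG (h2 ▸ hiG)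
  · apply eas_feasible_subset he hh hfJ
    · intro i hi
      rcases Finset.mem_insert.mp hi with rfl | hiG
      · exact hjJ
      · exact hsubG hiG
    · intro i hi
      rcases Finset.mem_insert.mp hi with rfl | hiG
      · rw [Function.update_self]
      · rw [Function.update_of_ne (by rintro rfl; exact hjG hiG)]
        exact (hagG i hiG).symm
end

section
/- Consider a weighted instance in which, for every job i, the schedule consisting only of job i (at some slot in {r_i,…,d_i}) is feasible. Let W_max = max_i w_i, let OPT = max over feasible schedules S of Σ_{i ∈ J(S)} w_i, and fix ε > 0. Define rounded weights w′_i = ⌊w_i · n / (ε · W_max)⌋ · (ε · W_max / n) for each i. Then: (i) for every feasible schedule S, Σ_{i ∈ J(S)} w′_i ≤ Σ_{i ∈ J(S)} w_i; and (ii) any feasible schedule S* maximizing Σ_{i ∈ J(S)} w′_i over feasible schedules satisfies Σ_{i ∈ J(S*)} w_i ≥ (1 − ε) · OPT. -/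
/-- Rounding the weights down to multiples of `ε·Wmax/n` as in
the FPTAS: (i) the rounded weight of any feasible schedule is at most its true
weight, and (ii) any feasible schedule maximizing the rounded weight has true
weight at least `(1 - ε) · OPT`. -/
theorem fptas_rounding (n T : ℕ) (r d : ℕ → ℕ) (e h : ℕ → ℤ) (w : ℕ → ℕ)
    (hn : 1 ≤ n)
    (he : ∀ i, 0 ≤ e i) (hh : ∀ t, 0 ≤ h t) (hw : ∀ i, 1 ≤ w i)
    (hsingle : ∀ i ∈ Finset.Icc 1 n,
      ∃ σ : ℕ → ℕ, IsFeasible n T r d e h {i} σ)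
    (Wmax : ℕ) (hWmax : Wmax = (Finset.Icc 1 n).sup w)
    (OPT : ℕ)
    (hOPT : IsGreatest {v : ℕ | ∃ (J : Finset ℕ) (σ : ℕ → ℕ),
      IsFeasible n T r d e h J σ ∧ v = ∑ i ∈ J, w i} OPT)
    (ε : ℝ) (hε : 0 < ε)
    (w' : ℕ → ℝ)
    (hw' : ∀ i, w' i = (⌊(w i : ℝ) * n / (ε * Wmax)⌋ : ℝ) * (ε * Wmax / n)) :
    (∀ (J : Finset ℕ) (σ : ℕ → ℕ), IsFeasible n T r d e h J σ →
      ∑ i ∈ J, w' i ≤ ∑ i ∈ J, (w i : ℝ)) ∧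
    (∀ (J' : Finset ℕ) (σ' : ℕ → ℕ), IsFeasible n T r d e h J' σ' →
      (∀ (J : Finset ℕ) (σ : ℕ → ℕ), IsFeasible n T r d e h J σ →
        ∑ i ∈ J, w' i ≤ ∑ i ∈ J', w' i) →
      (1 - ε) * (OPT : ℝ) ≤ ∑ i ∈ J', (w i : ℝ)) := by
  have hn' : (0:ℝ) < n := by exact_mod_cast hn
  have h1 : (1:ℕ) ∈ Finset.Icc 1 n := by simp [hn]
  have hWmax1 : 1 ≤ Wmax := le_trans (hw 1) (hWmax ▸ Finset.le_sup h1)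
  have hWpos : (0:ℝ) < Wmax := by exact_mod_cast hWmax1
  have hεW : (0:ℝ) < ε * Wmax := mul_pos hε hWpos
  have hKpos : 0 < ε * (Wmax:ℝ) / n := div_pos hεW hn'
  have hle : ∀ i, w' i ≤ (w i : ℝ) := by
    intro i
    rw [hw' i]
    calc (⌊(w i : ℝ) * n / (ε * Wmax)⌋ : ℝ) * (ε * Wmax / n)
        ≤ ((w i : ℝ) * n / (ε * Wmax)) * (ε * Wmax / n) :=
          mul_le_mul_of_nonneg_right (Int.floor_le _) hKpos.le
      _ = w i := by field_simp
  have hge : ∀ i, (w i : ℝ) - ε * Wmax / n ≤ w' i := by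
    intro i
    rw [hw' i]
    have hfl := Int.sub_one_lt_floor ((w i : ℝ) * n / (ε * Wmax))
    calc (w i : ℝ) - ε * Wmax / n
        = ((w i : ℝ) * n / (ε * Wmax) - 1) * (ε * Wmax / n) := by
          field_simp
      _ ≤ _ := mul_le_mul_of_nonneg_right hfl.le hKpos.le
  refine ⟨fun J σ _ => Finset.sum_le_sum fun i _ => hle i, ?_⟩
  intro J' σ' hfeas' hmax
  obtain ⟨⟨J0, σ0, hfeas0, hOPTeq⟩, hub⟩ := hOPT
  have hWO : (Wmax:ℝ) ≤ OPT := by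
    have : Wmax ≤ OPT := by
      rw [hWmax]
      apply Finset.sup_le
      intro i hi
      obtain ⟨σ, hσ⟩ := hsingle i hi
      exact hub ⟨{i}, σ, hσ, by simp⟩
    exact_mod_cast this
  have hcard : (J0.card : ℝ) ≤ n := by
    have h2 := Finset.card_le_card hfeas0.1
    rw [Nat.card_Icc] at h2
    exact_mod_cast le_trans h2 (by omega)
  have hOPTcast : (OPT : ℝ) = ∑ i ∈ J0, (w i : ℝ) := by
    rw [hOPTeq]; push_cast; ring
  have step1 : (OPT : ℝ) - n * (ε * Wmax / n) ≤ ∑ i ∈ J0, w' i := by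
    rw [hOPTcast]
    have : ∑ i ∈ J0, ((w i : ℝ) - ε * Wmax / n) ≤ ∑ i ∈ J0, w' i :=
      Finset.sum_le_sum fun i _ => hge i
    rw [Finset.sum_sub_distrib, Finset.sum_const, nsmul_eq_mul] at this
    nlinarith [hKpos]
  calc (1 - ε) * OPT = OPT - ε * OPT := by ring
    _ ≤ (OPT : ℝ) - ε * Wmax := by nlinarith
    _ = (OPT : ℝ) - n * (ε * Wmax / n) := by field_simp
    _ ≤ ∑ i ∈ J0, w' i := step1
    _ ≤ ∑ i ∈ J', w' i := hmax J0 σ0 hfeas0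
    _ ≤ ∑ i ∈ J', (w i : ℝ) := Finset.sum_le_sum fun i _ => hle i
end

section
/- Let α_1 ≥ α_2 ≥ … ≥ α_n be positive integers with n > 2, let S = Σ_{i=1}^n α_i with S > 2, let β be an integer with 0 < β < S, and let k < n be a positive integer. Consider the EAS instance with T = 2n − k + 2 time slots and n jobs, where job i has r_i = i + 1, d_i = 2n − k + 2, and e_i = S²n² + α_i·(Sn), and where h_1 = k·(S²n²) + β·(Sn); h_t = S − α_{t−1} for t ∈ {2,…,n+1}; h_{n+2} = (n−k)·(S²n²) + (S−β)·(Sn) − S·(n−k−1) − β; and h_t = 0 for t ∈ {n+3,…,2n−k+2}. Then there exists a feasible schedule scheduling all n jobs if and only if there exists a set I ⊆ {1,…,n} with |I| = k and Σ_{i ∈ I} α_i = β. -/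
lemma energyBefore_eq' (e h : ℕ → ℤ) (J : Finset ℕ) (σ : ℕ → ℕ) (t : ℕ)
    (hinj : Set.InjOn σ ↑J) (hσ1 : ∀ i ∈ J, 1 ≤ σ i) :
    energyBefore e h J σ t =
      (∑ τ ∈ Finset.Icc 1 (t - 1) \ (J.filter fun i => σ i < t).image σ, h τ) -
        ∑ i ∈ J.filter (fun i => σ i < t), e i := by
  have hsub : (J.filter fun i => σ i < t).image σ ⊆ Finset.Icc 1 (t - 1) := by
    intro τ hτ
    simp only [Finset.mem_image, Finset.mem_filter] at hτ
    obtain ⟨i, ⟨hiJ, hit⟩, rfl⟩ := hτ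
    have := hσ1 i hiJ
    simp only [Finset.mem_Icc]; omega
  rw [Finset.sum_sdiff_eq_sub hsub]
  have himg : ∑ τ ∈ (J.filter fun i => σ i < t).image σ, h τ
      = ∑ i ∈ J.filter (fun i => σ i < t), h (σ i) := by
    refine Finset.sum_image ?_
    intro x hx y hy hxy
    exact hinj (Finset.mem_coe.mpr (Finset.filter_subset _ _ hx))
      (Finset.mem_coe.mpr (Finset.filter_subset _ _ hy)) hxy
  rw [energyBefore, Finset.sum_add_distrib, himg]
  ring

set_option maxHeartbeats 1000000 in
/-- Correctness of the reduction from k-SUM to EAS with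
arbitrary release times and identical due dates: the constructed instance admits
a feasible schedule of all `n` jobs iff some `k` of the `α i` sum to `β`. -/
theorem ksum_reduction_arbitrary_release (n k : ℕ) (α : ℕ → ℤ) (S β : ℤ)
    (hn : 2 < n)
    (hα_pos : ∀ i ∈ Finset.Icc 1 n, 0 < α i)
    (hα_sorted : ∀ i j, 1 ≤ i → i ≤ j → j ≤ n → α j ≤ α i)
    (hS : S = ∑ i ∈ Finset.Icc 1 n, α i) (hS2 : 2 < S)
    (hβ : 0 < β) (hβS : β < S)
    (hk : 0 < k) (hkn : k < n)
    (r : ℕ → ℕ) (hr : ∀ i, r i = i + 1)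
    (d : ℕ → ℕ) (hd : ∀ i, d i = 2 * n - k + 2)
    (e : ℕ → ℤ) (he : ∀ i, e i = S ^ 2 * n ^ 2 + α i * (S * n))
    (h : ℕ → ℤ)
    (hh1 : h 1 = k * (S ^ 2 * n ^ 2) + β * (S * n))
    (hh2 : ∀ t, 2 ≤ t → t ≤ n + 1 → h t = S - α (t - 1))
    (hh3 : h (n + 2) =
      (n - k) * (S ^ 2 * n ^ 2) + (S - β) * (S * n) - S * ((n : ℤ) - k - 1) - β)
    (hh4 : ∀ t, n + 3 ≤ t → t ≤ 2 * n - k + 2 → h t = 0) :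
    (∃ σ : ℕ → ℕ,
      IsFeasible n (2 * n - k + 2) r d e h (Finset.Icc 1 n) σ) ↔
    ∃ I : Finset ℕ, I ⊆ Finset.Icc 1 n ∧ I.card = k ∧ ∑ i ∈ I, α i = β := by
  have hN : (3:ℤ) ≤ (n:ℤ) := by exact_mod_cast hn
  have hkZ : (1:ℤ) ≤ (k:ℤ) := by exact_mod_cast hk
  have hknZ : (k:ℤ) + 1 ≤ (n:ℤ) := by exact_mod_cast hkn
  have hα1 : ∀ i ∈ Finset.Icc 1 n, 1 ≤ α i := fun i hi => hα_pos i hi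
  -- each α i is at most S - 2
  have hαS : ∀ i ∈ Finset.Icc 1 n, α i ≤ S - 2 := by
    intro i hi
    have herase : α i + ∑ j ∈ (Finset.Icc 1 n).erase i, α j = S := by
      rw [hS, Finset.add_sum_erase _ _ hi]
    have hcard : ((Finset.Icc 1 n).erase i).card = n - 1 := by
      rw [Finset.card_erase_of_mem hi, Nat.card_Icc]; omega
    have hge : ((n:ℤ) - 1) ≤ ∑ j ∈ (Finset.Icc 1 n).erase i, α j := by
      have := Finset.card_nsmul_le_sum ((Finset.Icc 1 n).erase i) α 1
        (fun j hj => hα1 j (Finset.erase_subset _ _ hj))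
      rw [hcard] at this
      have h2 : ((n-1 : ℕ) : ℤ) = (n:ℤ) - 1 := by push_cast [Nat.cast_sub (by omega : 1 ≤ n)]; ring
      simpa [nsmul_eq_mul, h2] using this
    linarith
  have hh0 : ∀ τ, 1 ≤ τ → τ ≤ 2 * n - k + 2 → 0 ≤ h τ := by
    intro τ h1τ h2τ
    rcases Nat.lt_or_ge τ 2 with hτ | hτ
    · have : τ = 1 := by omega
      subst this; rw [hh1]
      have h1 : (0:ℤ) ≤ (k:ℤ) * (S^2 * n^2) := mul_nonneg (by linarith) (by positivity)
      have h2 : (0:ℤ) ≤ β * (S * n) := mul_nonneg (le_of_lt hβ) (by positivity)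
      linarith
    rcases Nat.lt_or_ge τ (n+2) with hτ2 | hτ2
    · rw [hh2 τ hτ (by omega)]
      have : α (τ-1) ≤ S - 2 := hαS _ (by simp [Finset.mem_Icc]; omega)
      linarith
    rcases Nat.lt_or_ge τ (n+3) with hτ3 | hτ3
    · have : τ = n + 2 := by omega
      subst this; rw [hh3]
      have h1 : (0:ℤ) ≤ ((n:ℤ) - k) * (S^2 * n^2) := by
        apply mul_nonneg (by linarith) (by positivity)
      have h2 : S * n ≤ (S - β) * (S * n) := by
        nlinarith [mul_pos (by linarith : (0:ℤ) < S) (by linarith : (0:ℤ) < (n:ℤ))]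
      nlinarith [mul_pos (by linarith : (0:ℤ) < S) (by linarith : (0:ℤ) < (n:ℤ))]
    · rw [hh4 τ hτ3 h2τ]
  -- sums of h over subsets of [2, n+1]
  have hsumX : ∀ X : Finset ℕ, X ⊆ Finset.Icc 2 (n+1) →
      ∑ τ ∈ X, h τ = (X.card : ℤ) * S - ∑ τ ∈ X, α (τ - 1) := by
    intro X hX
    have : ∑ τ ∈ X, h τ = ∑ τ ∈ X, (S - α (τ - 1)) := by
      refine Finset.sum_congr rfl fun τ hτ => ?_
      have := Finset.mem_Icc.mp (hX hτ)
      exact hh2 τ this.1 this.2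
    rw [this, Finset.sum_sub_distrib, Finset.sum_const, nsmul_eq_mul]
  have himgIcc : (Finset.Icc 1 n).image (· + 1) = Finset.Icc 2 (n+1) := by
    simpa using Finset.image_add_right_Icc 1 n 1
  have hreidx : ∀ g : ℕ → ℤ, ∑ τ ∈ Finset.Icc 2 (n+1), g (τ - 1) = ∑ j ∈ Finset.Icc 1 n, g j := by
    intro g
    rw [← himgIcc, Finset.sum_image (by intro x _ y _ hxy; simp only at hxy; omega)]
    simp
  have hsum2 : ∑ τ ∈ Finset.Icc 2 (n+1), h τ = (n:ℤ) * S - S := by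
    rw [hsumX _ (Finset.Subset.refl _), hreidx α, ← hS, Nat.card_Icc]
    have : n + 1 + 1 - 2 = n := by omega
    rw [this]
  have hsplit1 : Finset.Icc 1 (n+1) = insert 1 (Finset.Icc 2 (n+1)) := by
    ext τ; simp [Finset.mem_Icc]; omega
  have hsum1n1 : ∑ τ ∈ Finset.Icc 1 (n+1), h τ = h 1 + ((n:ℤ) * S - S) := by
    rw [hsplit1, Finset.sum_insert (by simp), hsum2]
  have hsplit2 : Finset.Icc 1 (n+2) = insert 1 (insert (n+2) (Finset.Icc 2 (n+1))) := by
    ext τ; simp [Finset.mem_Icc]; omega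
  have hsum1n2 : ∑ τ ∈ Finset.Icc 1 (n+2), h τ = h 1 + h (n+2) + ((n:ℤ) * S - S) := by
    rw [hsplit2, Finset.sum_insert (by simp), Finset.sum_insert (by simp [Finset.mem_Icc]), hsum2]
    ring
  -- sums of e over subsets of [1, n]
  have hesum : ∀ X : Finset ℕ, X ⊆ Finset.Icc 1 n →
      ∑ i ∈ X, e i = (X.card : ℤ) * (S^2 * n^2) + (∑ i ∈ X, α i) * (S * n) := by
    intro X hX
    have : ∑ i ∈ X, e i = ∑ i ∈ X, (S^2*n^2 + α i * (S*n)) :=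
      Finset.sum_congr rfl fun i _ => he i
    rw [this, Finset.sum_add_distrib, Finset.sum_const, nsmul_eq_mul, Finset.sum_mul]
  have he0 : ∀ i ∈ Finset.Icc 1 n, 0 ≤ e i := by
    intro i hi
    rw [he i]
    have := hα1 i hi
    have : (0:ℤ) ≤ α i * (S * n) := by
      apply mul_nonneg (by linarith) (by positivity)
    positivity
  constructor
  · rintro ⟨σ, hJsub, hinj, hprop⟩
    have hσ1 : ∀ i ∈ Finset.Icc 1 n, 1 ≤ σ i := fun i hi => (hprop i hi).1
    have hσT : ∀ i ∈ Finset.Icc 1 n, σ i ≤ 2*n - k + 2 := fun i hi => (hprop i hi).2.1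
    have hσ2 : ∀ i ∈ Finset.Icc 1 n, i + 1 ≤ σ i := by
      intro i hi
      have := (hprop i hi).2.2.1
      rwa [hr i] at this
    have hσge2 : ∀ i ∈ Finset.Icc 1 n, 2 ≤ σ i := by
      intro i hi
      have h1 := hσ2 i hi
      have h2 := (Finset.mem_Icc.mp hi).1
      omega
    have hE : ∀ i ∈ Finset.Icc 1 n,
        (∑ j ∈ (Finset.Icc 1 n).filter (fun j => σ j < σ i), e j) + e i ≤
        ∑ τ ∈ (Finset.Icc 1 (σ i - 1) \ (((Finset.Icc 1 n).filter (fun j => σ j < σ i)).image σ)), h τ := by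
      intro i hi
      have := (hprop i hi).2.2.2.2
      rw [energyBefore_eq' e h _ σ (σ i) hinj hσ1] at this
      linarith
    obtain ⟨i1, hi1J, hi1max⟩ := Finset.exists_max_image (Finset.Icc 1 n) σ
      ⟨1, by simp only [Finset.mem_Icc]; omega⟩
    have hF1 : (Finset.Icc 1 n).filter (fun j => σ j < σ i1) = (Finset.Icc 1 n).erase i1 := by
      ext j
      simp only [Finset.mem_filter, Finset.mem_erase]
      constructor
      · rintro ⟨hj, hlt⟩
        exact ⟨fun hji => by subst hji; omega, hj⟩
      · rintro ⟨hne, hj⟩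
        refine ⟨hj, lt_of_le_of_ne (hi1max j hj) ?_⟩
        intro hEq
        exact hne (hinj (Finset.mem_coe.mpr hj) (Finset.mem_coe.mpr hi1J) hEq)
    have hD1V : (Finset.Icc 1 (σ i1 - 1) \ (((Finset.Icc 1 n).filter (fun j => σ j < σ i1)).image σ))
        ⊆ Finset.Icc 1 (2*n-k+2) \ (Finset.Icc 1 n).image σ := by
      rw [hF1]
      intro τ hτ
      simp only [Finset.mem_sdiff, Finset.mem_Icc, Finset.mem_image, Finset.mem_erase] at hτ ⊢
      obtain ⟨⟨hτ1, hτ2⟩, hτ3⟩ := hτ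
      have hσi1T := hσT i1 hi1J
      have hσi1ge2 := hσge2 i1 hi1J
      refine ⟨⟨hτ1, by omega⟩, ?_⟩
      rintro ⟨j, hjJ, hjτ⟩
      by_cases hji : j = i1
      · subst hji; omega
      · exact hτ3 ⟨j, ⟨hji, hjJ⟩, hjτ⟩
    have hV0 : ∀ τ ∈ Finset.Icc 1 (2*n-k+2) \ (Finset.Icc 1 n).image σ, 0 ≤ h τ := by
      intro τ hτ
      have := Finset.mem_Icc.mp (Finset.mem_sdiff.mp hτ).1
      exact hh0 τ this.1 this.2
    have hsumJe : ∑ i ∈ Finset.Icc 1 n, e i = (n:ℤ) * (S^2*n^2) + S * (S*n) := by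
      rw [hesum _ (Finset.Subset.refl _), ← hS, Nat.card_Icc]
      have : n + 1 - 1 = n := by omega
      rw [this]
    have hstar : (n:ℤ) * (S^2*n^2) + S * (S*n) ≤
        ∑ τ ∈ Finset.Icc 1 (2*n-k+2) \ (Finset.Icc 1 n).image σ, h τ := by
      have h1 := hE i1 hi1J
      have h2 : ∑ j ∈ (Finset.Icc 1 n).filter (fun j => σ j < σ i1), e j + e i1
          = ∑ i ∈ Finset.Icc 1 n, e i := by
        rw [hF1, Finset.sum_erase_add _ _ hi1J]
      rw [h2, hsumJe] at h1
      exact le_trans h1 (Finset.sum_le_sum_of_subset_of_nonneg hD1V (fun τ hτ _ => hV0 τ hτ))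
    have hsplitT : Finset.Icc 1 (2*n-k+2) =
        Finset.Icc 1 (n+2) ∪ Finset.Icc (n+3) (2*n-k+2) := by
      ext τ; simp only [Finset.mem_Icc, Finset.mem_union]; omega
    have hsumT : ∑ τ ∈ Finset.Icc 1 (2*n-k+2), h τ = h 1 + h (n+2) + ((n:ℤ) * S - S) := by
      rw [hsplitT, Finset.sum_union (by
        simp only [Finset.disjoint_left, Finset.mem_Icc]
        intro a ha hb; omega), hsum1n2]
      rw [Finset.sum_eq_zero (fun τ hτ => by
        have := Finset.mem_Icc.mp hτ
        exact hh4 τ this.1 this.2)]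
      ring
    have pSn : (0:ℤ) < S * n := by positivity
    have pS2n2 : (0:ℤ) < S^2 * n^2 := by positivity
    have h3 : (k:ℤ) * (S^2*n^2) + S^2*n^2 ≤ (n:ℤ) * (S^2*n^2) := by
      have := mul_le_mul_of_nonneg_right hknZ (le_of_lt pS2n2)
      linarith [this]
    have h4 : β * (S*n) ≤ S^2*n - S*n := by
      have h4a : β * (S*n) ≤ (S-1) * (S*n) :=
        mul_le_mul_of_nonneg_right (by linarith) (le_of_lt pSn)
      have h4b : (S-1) * (S*n) = S^2*n - S*n := by ring
      linarith
    -- slot n+2 is unused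
    have hn2unused : (n+2 : ℕ) ∉ (Finset.Icc 1 n).image σ := by
      intro hmem
      have hVsub' : Finset.Icc 1 (2*n-k+2) \ (Finset.Icc 1 n).image σ
          ⊆ (Finset.Icc 1 (2*n-k+2)).erase (n+2) := by
        intro τ hτ
        rw [Finset.mem_sdiff] at hτ
        refine Finset.mem_erase.mpr ⟨?_, hτ.1⟩
        rintro rfl; exact hτ.2 hmem
      have hb : ∑ τ ∈ Finset.Icc 1 (2*n-k+2) \ (Finset.Icc 1 n).image σ, h τ ≤
          ∑ τ ∈ (Finset.Icc 1 (2*n-k+2)).erase (n+2), h τ :=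
        Finset.sum_le_sum_of_subset_of_nonneg hVsub' (fun τ hτ _ => by
          have := Finset.mem_Icc.mp (Finset.erase_subset _ _ hτ)
          exact hh0 τ this.1 this.2)
      have herase : ∑ τ ∈ (Finset.Icc 1 (2*n-k+2)).erase (n+2), h τ
          = h 1 + ((n:ℤ) * S - S) := by
        have hm : (n+2 : ℕ) ∈ Finset.Icc 1 (2*n-k+2) := by
          simp only [Finset.mem_Icc]; omega
        have := Finset.sum_erase_add (Finset.Icc 1 (2*n-k+2)) h hm
        rw [hsumT] at this
        linarith
      rw [herase, hh1] at hb
      linarith [hstar, hb, h3, h4, pSn, pS2n2]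
    -- counting jobs in the two slot ranges
    have hinjA : Set.InjOn σ ↑((Finset.Icc 1 n).filter (fun i => σ i ≤ n+1)) :=
      hinj.mono (Finset.coe_subset.mpr (Finset.filter_subset _ _))
    have hcardB : ((Finset.Icc 1 n).filter (fun i => n+3 ≤ σ i)).card ≤ n - k := by
      have hmaps : ∀ a ∈ ((Finset.Icc 1 n).filter (fun i => n+3 ≤ σ i)), σ a ∈ Finset.Icc (n+3) (2*n-k+2) := by
        intro a ha
        rw [Finset.mem_filter] at ha
        rw [Finset.mem_Icc]
        exact ⟨ha.2, hσT a ha.1⟩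
      have hc := Finset.card_le_card_of_injOn σ hmaps
        (hinj.mono (Finset.coe_subset.mpr (Finset.filter_subset _ _)))
      rw [Nat.card_Icc] at hc
      omega
    have hcardsplit : ((Finset.Icc 1 n).filter (fun i => σ i ≤ n+1)).card + ((Finset.Icc 1 n).filter (fun i => n+3 ≤ σ i)).card = n := by
      classical
      have h1 : ((Finset.Icc 1 n).filter (fun i => ¬ σ i ≤ n+1)) = ((Finset.Icc 1 n).filter (fun i => n+3 ≤ σ i)) := by
        ext j
        simp only [Finset.mem_filter]
        constructor
        · rintro ⟨hj, hj2⟩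
          refine ⟨hj, ?_⟩
          have hTj := hσT j hj
          have hne : σ j ≠ n+2 := fun hEq => hn2unused (Finset.mem_image.mpr ⟨j, hj, hEq⟩)
          omega
        · rintro ⟨hj, hj2⟩
          exact ⟨hj, by omega⟩
      have h2 := Finset.card_filter_add_card_filter_not
        (s := Finset.Icc 1 n) (p := fun i => σ i ≤ n+1)
      rw [h1, Nat.card_Icc] at h2
      omega
    have hcardAge : k ≤ ((Finset.Icc 1 n).filter (fun i => σ i ≤ n+1)).card := by omega
    have hcardAn : ((Finset.Icc 1 n).filter (fun i => σ i ≤ n+1)).card ≤ n := by omega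
    have himgA : (((Finset.Icc 1 n).filter (fun i => σ i ≤ n+1)).image σ) ⊆ Finset.Icc 2 (n+1) := by
      intro τ hτ
      rw [Finset.mem_image] at hτ
      obtain ⟨i, hi, rfl⟩ := hτ
      rw [Finset.mem_filter] at hi
      rw [Finset.mem_Icc]
      exact ⟨hσge2 i hi.1, hi.2⟩
    have hcardimgA : (((Finset.Icc 1 n).filter (fun i => σ i ≤ n+1)).image σ).card = ((Finset.Icc 1 n).filter (fun i => σ i ≤ n+1)).card := Finset.card_image_of_injOn hinjA
    have hcardW : (Finset.Icc 2 (n+1) \ (((Finset.Icc 1 n).filter (fun i => σ i ≤ n+1)).image σ)).card = n - ((Finset.Icc 1 n).filter (fun i => σ i ≤ n+1)).card := by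
      rw [Finset.card_sdiff_of_subset himgA, hcardimgA, Nat.card_Icc]
      omega
    have hVsub2 : Finset.Icc 1 (2*n-k+2) \ (Finset.Icc 1 n).image σ ⊆
        insert 1 (insert (n+2) ((Finset.Icc 2 (n+1) \ (((Finset.Icc 1 n).filter (fun i => σ i ≤ n+1)).image σ)) ∪ Finset.Icc (n+3) (2*n-k+2))) := by
      intro τ hτ
      rw [Finset.mem_sdiff, Finset.mem_Icc] at hτ
      obtain ⟨⟨h1τ, h2τ⟩, h3τ⟩ := hτ
      simp only [Finset.mem_insert, Finset.mem_union, Finset.mem_sdiff, Finset.mem_Icc]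
      by_cases hc1 : τ = 1
      · exact Or.inl hc1
      right
      by_cases hc2 : τ = n+2
      · exact Or.inl hc2
      right
      by_cases hc3 : τ ≤ n+1
      · left
        refine ⟨⟨by omega, hc3⟩, ?_⟩
        intro hmem
        exact h3τ (Finset.image_subset_image (Finset.filter_subset _ _) hmem)
      · right
        omega
    have hmemBig : ∀ τ ∈ insert 1 (insert (n+2) ((Finset.Icc 2 (n+1) \ (((Finset.Icc 1 n).filter (fun i => σ i ≤ n+1)).image σ)) ∪ Finset.Icc (n+3) (2*n-k+2))),
        1 ≤ τ ∧ τ ≤ 2*n-k+2 := by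
      intro τ hτ
      simp only [Finset.mem_insert, Finset.mem_union, Finset.mem_sdiff, Finset.mem_Icc] at hτ
      rcases hτ with h'|h'|⟨⟨h',h''⟩,_⟩|⟨h',h''⟩ <;> omega
    have hsumBig : ∑ τ ∈ insert 1 (insert (n+2) ((Finset.Icc 2 (n+1) \ (((Finset.Icc 1 n).filter (fun i => σ i ≤ n+1)).image σ)) ∪ Finset.Icc (n+3) (2*n-k+2))), h τ
        = h 1 + h (n+2) + ∑ τ ∈ (Finset.Icc 2 (n+1) \ (((Finset.Icc 1 n).filter (fun i => σ i ≤ n+1)).image σ)), h τ := by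
      rw [Finset.sum_insert (by
        intro hmem
        simp only [Finset.mem_insert, Finset.mem_union, Finset.mem_sdiff, Finset.mem_Icc] at hmem
        rcases hmem with h'|⟨⟨h',h''⟩,_⟩|⟨h',h''⟩ <;> omega)]
      rw [Finset.sum_insert (by
        intro hmem
        simp only [Finset.mem_union, Finset.mem_sdiff, Finset.mem_Icc] at hmem
        rcases hmem with ⟨⟨h',h''⟩,_⟩|⟨h',h''⟩ <;> omega)]
      rw [Finset.sum_union (by
        simp only [Finset.disjoint_left, Finset.mem_sdiff, Finset.mem_Icc]
        rintro a ⟨⟨h', h''⟩, _⟩ ⟨h3, h4⟩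
        omega)]
      rw [Finset.sum_eq_zero (s := Finset.Icc (n+3) (2*n-k+2)) (fun τ hτ => by
        have := Finset.mem_Icc.mp hτ
        exact hh4 τ this.1 this.2)]
      ring
    have hWa0 : 0 ≤ ∑ τ ∈ (Finset.Icc 2 (n+1) \ (((Finset.Icc 1 n).filter (fun i => σ i ≤ n+1)).image σ)), α (τ - 1) := by
      refine Finset.sum_nonneg fun τ hτ => ?_
      have := Finset.mem_Icc.mp (Finset.mem_sdiff.mp hτ).1
      have := hα1 (τ-1) (by rw [Finset.mem_Icc]; omega)
      linarith
    have hWcast : (((Finset.Icc 2 (n+1) \ (((Finset.Icc 1 n).filter (fun i => σ i ≤ n+1)).image σ)).card : ℕ) : ℤ) = (n:ℤ) - (((Finset.Icc 1 n).filter (fun i => σ i ≤ n+1)).card : ℤ) := by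
      rw [hcardW, Nat.cast_sub hcardAn]
    have hWhsum : ∑ τ ∈ (Finset.Icc 2 (n+1) \ (((Finset.Icc 1 n).filter (fun i => σ i ≤ n+1)).image σ)), h τ = ((n:ℤ) - (((Finset.Icc 1 n).filter (fun i => σ i ≤ n+1)).card : ℤ)) * S - ∑ τ ∈ (Finset.Icc 2 (n+1) \ (((Finset.Icc 1 n).filter (fun i => σ i ≤ n+1)).image σ)), α (τ - 1) := by
      rw [hsumX (Finset.Icc 2 (n+1) \ (((Finset.Icc 1 n).filter (fun i => σ i ≤ n+1)).image σ)) Finset.sdiff_subset, hWcast]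
    have hstar2 : (n:ℤ)*(S^2*n^2) + S*(S*n) ≤ h 1 + h (n+2) + ∑ τ ∈ (Finset.Icc 2 (n+1) \ (((Finset.Icc 1 n).filter (fun i => σ i ≤ n+1)).image σ)), h τ := by
      refine le_trans hstar ?_
      rw [← hsumBig]
      exact Finset.sum_le_sum_of_subset_of_nonneg hVsub2
        (fun τ hτ _ => hh0 τ (hmemBig τ hτ).1 (hmemBig τ hτ).2)
    have hdiamond : S*((n:ℤ)-k-1) + β + ∑ τ ∈ (Finset.Icc 2 (n+1) \ (((Finset.Icc 1 n).filter (fun i => σ i ≤ n+1)).image σ)), α (τ - 1)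
        ≤ ((n:ℤ) - (((Finset.Icc 1 n).filter (fun i => σ i ≤ n+1)).card : ℤ)) * S := by
      rw [hh1, hh3, hWhsum] at hstar2
      linarith
    have hacard : ((Finset.Icc 1 n).filter (fun i => σ i ≤ n+1)).card = k := by
      by_contra hne
      have hge : (k:ℤ) + 1 ≤ (((Finset.Icc 1 n).filter (fun i => σ i ≤ n+1)).card : ℤ) := by
        have : k + 1 ≤ ((Finset.Icc 1 n).filter (fun i => σ i ≤ n+1)).card := by omega
        exact_mod_cast this
      have hmono : ((n:ℤ) - (((Finset.Icc 1 n).filter (fun i => σ i ≤ n+1)).card : ℤ)) * S ≤ ((n:ℤ)-k-1) * S :=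
        mul_le_mul_of_nonneg_right (by linarith) (by linarith)
      linarith [hdiamond, hmono, hWa0]
    have hakZ : ((((Finset.Icc 1 n).filter (fun i => σ i ≤ n+1)).card : ℕ) : ℤ) = (k:ℤ) := by exact_mod_cast hacard
    have hWab : ∑ τ ∈ (Finset.Icc 2 (n+1) \ (((Finset.Icc 1 n).filter (fun i => σ i ≤ n+1)).image σ)), α (τ - 1) ≤ S - β := by
      rw [hakZ] at hdiamond
      linarith [hdiamond]
    have hsdiffα : ∑ τ ∈ (Finset.Icc 2 (n+1) \ (((Finset.Icc 1 n).filter (fun i => σ i ≤ n+1)).image σ)), α (τ-1) + ∑ τ ∈ (((Finset.Icc 1 n).filter (fun i => σ i ≤ n+1)).image σ), α (τ-1) = S := by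
      rw [Finset.sum_sdiff himgA, hreidx (fun j => α j), ← hS]
    have himgsum : ∑ τ ∈ (((Finset.Icc 1 n).filter (fun i => σ i ≤ n+1)).image σ), α (τ-1) = ∑ i ∈ ((Finset.Icc 1 n).filter (fun i => σ i ≤ n+1)), α (σ i - 1) := by
      refine Finset.sum_image ?_
      intro x hx y hy hxy
      exact hinjA (Finset.mem_coe.mpr hx) (Finset.mem_coe.mpr hy) hxy
    have hAsum_ge : β ≤ ∑ i ∈ ((Finset.Icc 1 n).filter (fun i => σ i ≤ n+1)), α i := by
      have h1' : ∑ i ∈ ((Finset.Icc 1 n).filter (fun i => σ i ≤ n+1)), α (σ i - 1) ≤ ∑ i ∈ ((Finset.Icc 1 n).filter (fun i => σ i ≤ n+1)), α i := by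
        refine Finset.sum_le_sum fun i hi => ?_
        have hiJ := Finset.filter_subset (fun i => σ i ≤ n+1) (Finset.Icc 1 n) hi
        have h2' := hσ2 i hiJ
        have h3' := Finset.mem_Icc.mp hiJ
        have h4' := (Finset.mem_filter.mp hi).2
        exact hα_sorted i (σ i - 1) h3'.1 (by omega) (by omega)
      rw [himgsum] at hsdiffα
      linarith
    -- upper bound via the last job among slots 2..n+1
    have hAne : ((Finset.Icc 1 n).filter (fun i => σ i ≤ n+1)).Nonempty := Finset.card_pos.mp (by omega)
    obtain ⟨i2, hi2A, hi2max⟩ := Finset.exists_max_image ((Finset.Icc 1 n).filter (fun i => σ i ≤ n+1)) σ hAne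
    have hi2J : i2 ∈ Finset.Icc 1 n := Finset.filter_subset _ _ hi2A
    have hi2n1 : σ i2 ≤ n+1 := (Finset.mem_filter.mp hi2A).2
    have hF2 : (Finset.Icc 1 n).filter (fun j => σ j < σ i2) = ((Finset.Icc 1 n).filter (fun i => σ i ≤ n+1)).erase i2 := by
      ext j
      constructor
      · intro hj
        rw [Finset.mem_filter] at hj
        refine Finset.mem_erase.mpr ⟨fun hji => by subst hji; omega, ?_⟩
        exact Finset.mem_filter.mpr ⟨hj.1, by omega⟩
      · intro hj
        obtain ⟨hne, hjA⟩ := Finset.mem_erase.mp hj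
        have hjJ := Finset.filter_subset (fun i => σ i ≤ n+1) (Finset.Icc 1 n) hjA
        refine Finset.mem_filter.mpr ⟨hjJ, lt_of_le_of_ne (hi2max j hjA) ?_⟩
        intro hEq
        exact hne (hinj (Finset.mem_coe.mpr hjJ) (Finset.mem_coe.mpr hi2J) hEq)
    have hEi2 := hE i2 hi2J
    rw [hF2, Finset.sum_erase_add _ _ hi2A] at hEi2
    have hsub3 : Finset.Icc 1 (σ i2 - 1) \ (((Finset.Icc 1 n).filter (fun i => σ i ≤ n+1)).erase i2).image σ ⊆ Finset.Icc 1 (n+1) := by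
      intro τ hτ
      have := Finset.mem_Icc.mp (Finset.mem_sdiff.mp hτ).1
      rw [Finset.mem_Icc]
      omega
    have hRHS : ∑ τ ∈ Finset.Icc 1 (σ i2 - 1) \ (((Finset.Icc 1 n).filter (fun i => σ i ≤ n+1)).erase i2).image σ, h τ
        ≤ ∑ τ ∈ Finset.Icc 1 (n+1), h τ := by
      refine Finset.sum_le_sum_of_subset_of_nonneg hsub3 fun τ hτ _ => ?_
      have := Finset.mem_Icc.mp hτ
      exact hh0 τ this.1 (by omega)
    have heA : ∑ i ∈ ((Finset.Icc 1 n).filter (fun i => σ i ≤ n+1)), e i = ((((Finset.Icc 1 n).filter (fun i => σ i ≤ n+1)).card : ℕ) : ℤ) * (S^2*n^2) + (∑ i ∈ ((Finset.Icc 1 n).filter (fun i => σ i ≤ n+1)), α i) * (S*n) :=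
      hesum ((Finset.Icc 1 n).filter (fun i => σ i ≤ n+1)) (Finset.filter_subset _ _)
    have hub : (∑ i ∈ ((Finset.Icc 1 n).filter (fun i => σ i ≤ n+1)), α i) ≤ β := by
      have h5 := le_trans hEi2 hRHS
      rw [hsum1n1, hh1, heA, hakZ] at h5
      have h6 : (∑ i ∈ ((Finset.Icc 1 n).filter (fun i => σ i ≤ n+1)), α i) * (S*n) < (β+1)*(S*n) := by linarith [h5, hS2]
      have h7 := lt_of_mul_lt_mul_right h6 (le_of_lt pSn)
      exact Int.lt_add_one_iff.mp h7
    exact ⟨((Finset.Icc 1 n).filter (fun i => σ i ≤ n+1)), Finset.filter_subset _ _, hacard, le_antisymm hub hAsum_ge⟩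
  · rintro ⟨I, hI, hIcard, hIsum⟩
    classical
    set σ0 : ℕ → ℕ := fun i => if i ∈ I then i + 1 else n + 2 + ((Finset.Icc 1 i) \ I).card
      with hσ0def
    have hσI : ∀ i ∈ I, σ0 i = i + 1 := by
      intro i hi
      simp only [hσ0def, if_pos hi]
    have hσnI : ∀ i, i ∉ I → σ0 i = n + 2 + ((Finset.Icc 1 i) \ I).card := by
      intro i hi
      simp only [hσ0def, if_neg hi]
    have hcnk : ((Finset.Icc 1 n) \ I).card = n - k := by
      rw [Finset.card_sdiff_of_subset hI, hIcard, Nat.card_Icc]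
      omega
    have hc1 : ∀ i, i ∈ Finset.Icc 1 n → i ∉ I → 1 ≤ ((Finset.Icc 1 i) \ I).card := by
      intro i hiIcc hiI
      have hmem : i ∈ (Finset.Icc 1 i) \ I := by
        rw [Finset.mem_sdiff, Finset.mem_Icc]
        exact ⟨⟨(Finset.mem_Icc.mp hiIcc).1, le_refl i⟩, hiI⟩
      exact Finset.card_pos.mpr ⟨i, hmem⟩
    have hcmono : ∀ i j : ℕ, i ≤ j → ((Finset.Icc 1 i) \ I).card ≤ ((Finset.Icc 1 j) \ I).card := by
      intro i j hij
      refine Finset.card_le_card (Finset.sdiff_subset_sdiff ?_ (Finset.Subset.refl _))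
      intro x hx
      rw [Finset.mem_Icc] at hx ⊢
      omega
    have hcstrict : ∀ i j : ℕ, 1 ≤ i → i ∉ I → j < i →
        ((Finset.Icc 1 j) \ I).card < ((Finset.Icc 1 i) \ I).card := by
      intro i j h1i hiI hji
      refine Finset.card_lt_card ?_
      rw [Finset.ssubset_iff_of_subset (Finset.sdiff_subset_sdiff (by
        intro x hx
        rw [Finset.mem_Icc] at hx ⊢
        omega) (Finset.Subset.refl _))]
      refine ⟨i, ?_, ?_⟩
      · rw [Finset.mem_sdiff, Finset.mem_Icc]
        exact ⟨⟨h1i, le_refl i⟩, hiI⟩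
      · rw [Finset.mem_sdiff, Finset.mem_Icc]
        intro hcon
        omega
    have hcle : ∀ i, i ≤ n → ((Finset.Icc 1 i) \ I).card ≤ n - k := by
      intro i hin
      rw [← hcnk]
      exact hcmono i n hin
    have hσ1 : ∀ i ∈ Finset.Icc 1 n, 1 ≤ σ0 i := by
      intro i hi
      by_cases hiI : i ∈ I
      · rw [hσI i hiI]; omega
      · rw [hσnI i hiI]; omega
    have hσr : ∀ i ∈ Finset.Icc 1 n, i + 1 ≤ σ0 i := by
      intro i hi
      by_cases hiI : i ∈ I
      · rw [hσI i hiI]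
      · rw [hσnI i hiI]
        have := (Finset.mem_Icc.mp hi).2
        omega
    have hσhigh : ∀ i ∈ Finset.Icc 1 n, i ∉ I → n + 3 ≤ σ0 i := by
      intro i hi hiI
      rw [hσnI i hiI]
      have := hc1 i hi hiI
      omega
    have hσT : ∀ i ∈ Finset.Icc 1 n, σ0 i ≤ 2*n - k + 2 := by
      intro i hi
      have hin := (Finset.mem_Icc.mp hi).2
      by_cases hiI : i ∈ I
      · rw [hσI i hiI]; omega
      · rw [hσnI i hiI]
        have := hcle i hin
        omega
    have hinj : Set.InjOn σ0 ↑(Finset.Icc 1 n) := by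
      intro a ha b hb hab
      rw [Finset.mem_coe] at ha hb
      have han := Finset.mem_Icc.mp ha
      have hbn := Finset.mem_Icc.mp hb
      by_cases haI : a ∈ I <;> by_cases hbI : b ∈ I
      · rw [hσI a haI, hσI b hbI] at hab; omega
      · rw [hσI a haI, hσnI b hbI] at hab
        have := hc1 b hb hbI
        omega
      · rw [hσnI a haI, hσI b hbI] at hab
        have := hc1 a ha haI
        omega
      · rw [hσnI a haI, hσnI b hbI] at hab
        rcases lt_trichotomy a b with h' | h' | h'
        · have := hcstrict b a hbn.1 hbI h'
          omega
        · exact h'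
        · have := hcstrict a b han.1 haI h'
          omega
    refine ⟨σ0, Finset.Subset.refl _, hinj, ?_⟩
    intro i hi
    have hin := Finset.mem_Icc.mp hi
    refine ⟨hσ1 i hi, hσT i hi, by rw [hr i]; exact hσr i hi, by rw [hd i]; exact hσT i hi, ?_⟩
    rw [energyBefore_eq' e h _ σ0 (σ0 i) hinj hσ1]
    by_cases hiI : i ∈ I
    · -- job in I, scheduled at slot i+1
      rw [hσI i hiI, Nat.add_sub_cancel]
      have hFI : (Finset.Icc 1 n).filter (fun j => σ0 j < i + 1) = I.filter (fun j => j < i) := by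
        ext j
        constructor
        · intro hj
          obtain ⟨hjIcc, hjlt⟩ := Finset.mem_filter.mp hj
          by_cases hjI : j ∈ I
          · rw [hσI j hjI] at hjlt
            exact Finset.mem_filter.mpr ⟨hjI, by omega⟩
          · exfalso
            have := hσhigh j hjIcc hjI
            omega
        · intro hj
          obtain ⟨hjI, hjlt⟩ := Finset.mem_filter.mp hj
          refine Finset.mem_filter.mpr ⟨hI hjI, ?_⟩
          rw [hσI j hjI]
          omega
      rw [hFI]
      have hD1 : (1:ℕ) ∈ Finset.Icc 1 i \ (I.filter (fun j => j < i)).image σ0 := by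
        rw [Finset.mem_sdiff, Finset.mem_Icc]
        refine ⟨⟨le_refl 1, hin.1⟩, ?_⟩
        intro hmem
        obtain ⟨j, hj, hj1⟩ := Finset.mem_image.mp hmem
        have hjI := (Finset.mem_filter.mp hj).1
        rw [hσI j hjI] at hj1
        have := (Finset.mem_Icc.mp (hI hjI)).1
        omega
      have hDge : h 1 ≤ ∑ τ ∈ Finset.Icc 1 i \ (I.filter (fun j => j < i)).image σ0, h τ := by
        refine Finset.single_le_sum (fun τ hτ => ?_) hD1
        have := Finset.mem_Icc.mp (Finset.mem_sdiff.mp hτ).1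
        exact hh0 τ this.1 (by omega)
      have hFsub : I.filter (fun j => j < i) ⊆ I.erase i := by
        intro j hj
        obtain ⟨hjI, hjlt⟩ := Finset.mem_filter.mp hj
        exact Finset.mem_erase.mpr ⟨by omega, hjI⟩
      have hFcard : ((I.filter (fun j => j < i)).card : ℤ) + 1 ≤ (k:ℤ) := by
        have h1' := Finset.card_le_card hFsub
        rw [Finset.card_erase_of_mem hiI, hIcard] at h1'
        have : (I.filter (fun j => j < i)).card + 1 ≤ k := by omega
        exact_mod_cast this
      have hFα : (∑ j ∈ I.filter (fun j => j < i), α j) + α i ≤ β := by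
        have hsub' : insert i (I.filter (fun j => j < i)) ⊆ I := by
          intro j hj
          rcases Finset.mem_insert.mp hj with rfl | hj'
          · exact hiI
          · exact Finset.filter_subset _ _ hj'
        have h1' : ∑ j ∈ insert i (I.filter (fun j => j < i)), α j ≤ ∑ j ∈ I, α j := by
          refine Finset.sum_le_sum_of_subset_of_nonneg hsub' fun j hj _ => ?_
          have := hα1 j (hI hj)
          linarith
        rw [Finset.sum_insert (by
          intro hcon
          have := (Finset.mem_filter.mp hcon).2
          omega), hIsum] at h1'
        linarith
      have hFe : ∑ j ∈ I.filter (fun j => j < i), e j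
          = ((I.filter (fun j => j < i)).card : ℤ) * (S^2*n^2)
            + (∑ j ∈ I.filter (fun j => j < i), α j) * (S*n) :=
        hesum _ ((Finset.filter_subset _ _).trans hI)
      have t1 : 0 ≤ ((k:ℤ) - ((I.filter (fun j => j < i)).card : ℤ) - 1) * (S^2*n^2) :=
        mul_nonneg (by linarith) (by positivity)
      have t2 : 0 ≤ (β - (∑ j ∈ I.filter (fun j => j < i), α j) - α i) * (S*n) :=
        mul_nonneg (by linarith) (by positivity)
      rw [he i]
      rw [hh1] at hDge
      linarith [hDge, hFe, t1, t2]
    · -- job not in I, scheduled at slot n+2+c i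
      rw [hσnI i hiI]
      have hci1 : 1 ≤ ((Finset.Icc 1 i) \ I).card := hc1 i hi hiI
      have hcin : ((Finset.Icc 1 i) \ I).card ≤ n - k := hcle i hin.2
      have hidx : n + 2 + ((Finset.Icc 1 i) \ I).card - 1 = n + 1 + ((Finset.Icc 1 i) \ I).card := by
        omega
      rw [hidx]
      have hFnI : (Finset.Icc 1 n).filter (fun j => σ0 j < n + 2 + ((Finset.Icc 1 i) \ I).card)
          = I ∪ (Finset.Icc 1 n).filter (fun j => j ∉ I ∧ j < i) := by
        ext j
        constructor
        · intro hj
          obtain ⟨hjIcc, hjlt⟩ := Finset.mem_filter.mp hj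
          by_cases hjI : j ∈ I
          · exact Finset.mem_union_left _ hjI
          · rw [hσnI j hjI] at hjlt
            refine Finset.mem_union_right _ (Finset.mem_filter.mpr ⟨hjIcc, hjI, ?_⟩)
            by_contra hcon
            have := hcmono i j (by omega)
            omega
        · intro hj
          rcases Finset.mem_union.mp hj with hjI | hjG
          · refine Finset.mem_filter.mpr ⟨hI hjI, ?_⟩
            rw [hσI j hjI]
            have := (Finset.mem_Icc.mp (hI hjI)).2
            omega
          · obtain ⟨hjIcc, hjnI, hjlt⟩ := Finset.mem_filter.mp hjG
            refine Finset.mem_filter.mpr ⟨hjIcc, ?_⟩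
            rw [hσnI j hjnI]
            have := hcstrict i j hin.1 hiI hjlt
            omega
      rw [hFnI]
      have hdisjIG : Disjoint I ((Finset.Icc 1 n).filter (fun j => j ∉ I ∧ j < i)) := by
        rw [Finset.disjoint_left]
        intro j hjI hjG
        exact (Finset.mem_filter.mp hjG).2.1 hjI
      rw [Finset.sum_union hdisjIG]
      -- lower bound the harvested sum
      have himg1 : I.image (· + 1) ⊆ Finset.Icc 1 (n+2) := by
        intro τ hτ
        obtain ⟨j, hj, rfl⟩ := Finset.mem_image.mp hτ
        have := Finset.mem_Icc.mp (hI hj)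
        rw [Finset.mem_Icc]
        omega
      have hD'sub : Finset.Icc 1 (n+2) \ I.image (· + 1) ⊆
          Finset.Icc 1 (n+1+((Finset.Icc 1 i) \ I).card) \
            ((I ∪ (Finset.Icc 1 n).filter (fun j => j ∉ I ∧ j < i)).image σ0) := by
        intro τ hτ
        obtain ⟨hτIcc, hτimg⟩ := Finset.mem_sdiff.mp hτ
        have hτb := Finset.mem_Icc.mp hτIcc
        rw [Finset.mem_sdiff, Finset.mem_Icc]
        refine ⟨⟨hτb.1, by omega⟩, ?_⟩
        intro hmem
        obtain ⟨j, hj, hjτ⟩ := Finset.mem_image.mp hmem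
        rcases Finset.mem_union.mp hj with hjI | hjG
        · rw [hσI j hjI] at hjτ
          exact hτimg (Finset.mem_image.mpr ⟨j, hjI, hjτ⟩)
        · obtain ⟨hjIcc, hjnI, _⟩ := Finset.mem_filter.mp hjG
          have := hσhigh j hjIcc hjnI
          rw [hσnI j hjnI] at hjτ
          have := hc1 j hjIcc hjnI
          omega
      have hDge : ∑ τ ∈ Finset.Icc 1 (n+2) \ I.image (· + 1), h τ ≤
          ∑ τ ∈ Finset.Icc 1 (n+1+((Finset.Icc 1 i) \ I).card) \
            ((I ∪ (Finset.Icc 1 n).filter (fun j => j ∉ I ∧ j < i)).image σ0), h τ := by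
        refine Finset.sum_le_sum_of_subset_of_nonneg hD'sub fun τ hτ _ => ?_
        have := Finset.mem_Icc.mp (Finset.mem_sdiff.mp hτ).1
        exact hh0 τ this.1 (by omega)
      have himgsum : ∑ τ ∈ I.image (· + 1), h τ = (k:ℤ) * S - β := by
        rw [Finset.sum_image (fun x _ y _ hxy => by omega)]
        have : ∑ j ∈ I, h (j + 1) = ∑ j ∈ I, (S - α j) := by
          refine Finset.sum_congr rfl fun j hj => ?_
          have := Finset.mem_Icc.mp (hI hj)
          have h2' := hh2 (j+1) (by omega) (by omega)
          rw [h2']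
          simp
        rw [this, Finset.sum_sub_distrib, Finset.sum_const, hIcard, hIsum, nsmul_eq_mul]
      have hD'val : ∑ τ ∈ Finset.Icc 1 (n+2) \ I.image (· + 1), h τ
          = h 1 + h (n+2) + ((n:ℤ)*S - S) - ((k:ℤ)*S - β) := by
        rw [Finset.sum_sdiff_eq_sub himg1, hsum1n2, himgsum]
      -- e-sums
      have hIe : ∑ j ∈ I, e j = (k:ℤ) * (S^2*n^2) + β * (S*n) := by
        rw [hesum I hI, hIcard, hIsum]
      have hcompα : ∑ j ∈ (Finset.Icc 1 n) \ I, α j = S - β := by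
        have := Finset.sum_sdiff (f := α) hI
        rw [hIsum, ← hS] at this
        linarith
      have hcompe : ∑ j ∈ (Finset.Icc 1 n) \ I, e j
          = ((n:ℤ) - k) * (S^2*n^2) + (S - β) * (S*n) := by
        rw [hesum _ Finset.sdiff_subset, hcnk, hcompα, Nat.cast_sub (by omega : k ≤ n)]
      have hGsub : insert i ((Finset.Icc 1 n).filter (fun j => j ∉ I ∧ j < i))
          ⊆ (Finset.Icc 1 n) \ I := by
        intro j hj
        rcases Finset.mem_insert.mp hj with rfl | hj'
        · exact Finset.mem_sdiff.mpr ⟨hi, hiI⟩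
        · obtain ⟨hjIcc, hjnI, _⟩ := Finset.mem_filter.mp hj'
          exact Finset.mem_sdiff.mpr ⟨hjIcc, hjnI⟩
      have hGe : (∑ j ∈ (Finset.Icc 1 n).filter (fun j => j ∉ I ∧ j < i), e j) + e i
          ≤ ((n:ℤ) - k) * (S^2*n^2) + (S - β) * (S*n) := by
        have h1' : ∑ j ∈ insert i ((Finset.Icc 1 n).filter (fun j => j ∉ I ∧ j < i)), e j
            ≤ ∑ j ∈ (Finset.Icc 1 n) \ I, e j := by
          refine Finset.sum_le_sum_of_subset_of_nonneg hGsub fun j hj _ =>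
            he0 j (Finset.mem_sdiff.mp hj).1
        rw [Finset.sum_insert (by
          intro hcon
          have := (Finset.mem_filter.mp hcon).2.2
          omega), hcompe] at h1'
        linarith
      rw [hh1, hh3] at hD'val
      linarith [hDge, hD'val, hIe, hGe]
end
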